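/- arXiv:cs/0508049 — 5 statements merged into one kernel-verified Lean document; each statement's English description precedes it below -/
import Mathlib

section
/- If p = (p₁,…,p_n) is an unscaled pseudo-codeword of H, then p lies in the fundamental cone K(H) (viewing p as a vector in ℝⁿ), and Hpᵀ = 0 over F₂ (that is, Σ_i h_{ji} p_i is even for every row index j, so the mod-2 reduction of p is a codeword of C). -/
open Finset

/-- The fundamental cone of a 0-1 matrix `H` (entries in `ZMod 2`, read as reals via `.val`). -/
def InFundCone {R I : Type*} [Fintype I] [DecidableEq I] (H : Matrix R I (ZMod 2)) (ν : I → ℝ) : Prop :=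
  (∀ i, 0 ≤ ν i) ∧
  ∀ (j : R) (i : I), ((H j i).val : ℝ) * ν i ≤ ∑ i' ∈ Finset.univ.erase i, ((H j i').val : ℝ) * ν i'

/-- The `M`-lift of `H` determined by permutations `σ j i`. -/
def matLift {R I : Type*} (H : Matrix R I (ZMod 2)) {M : ℕ} (σ : R → I → Equiv.Perm (Fin M)) :
    Matrix (R × Fin M) (I × Fin M) (ZMod 2) :=
  fun jl ik => if H jl.1 ik.1 = 1 ∧ σ jl.1 ik.1 jl.2 = ik.2 then 1 else 0

/-- `p` is an unscaled pseudo-codeword of `H`. -/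
def IsUnscaledPseudoCodeword {R I : Type*} [Fintype R] [Fintype I]
    (H : Matrix R I (ZMod 2)) (p : I → ℕ) : Prop :=
  ∃ M : ℕ, 0 < M ∧ ∃ (σ : R → I → Equiv.Perm (Fin M)) (c : I × Fin M → ZMod 2),
    (matLift H σ).mulVec c = 0 ∧
    ∀ i, p i = (Finset.univ.filter (fun k : Fin M => c (i, k) = 1)).card

/-- The Tanner graph of `H`: bit nodes = columns, check nodes = rows. -/
def TannerGraph {R I : Type*} (H : Matrix R I (ZMod 2)) : SimpleGraph (I ⊕ R) where
  Adj v w := match v, w with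
    | Sum.inl i, Sum.inr j => H j i = 1
    | Sum.inr j, Sum.inl i => H j i = 1
    | _, _ => False
  symm := ⟨by rintro (i | j) (i' | j') h <;> simp_all⟩
  loopless := ⟨by rintro (i | j) h <;> simp_all⟩

/-- `π : W → V` realizes `G'` as an `M`-cover of `G`. -/
def IsMCover {V W : Type*} (G : SimpleGraph V) (G' : SimpleGraph W) (π : W → V) (M : ℕ) : Prop :=
  Function.Surjective π ∧
  (∀ a b, G'.Adj a b → G.Adj (π a) (π b)) ∧
  (∀ v : V, Nat.card (π ⁻¹' {v}) = M) ∧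
  (∀ w : W, Set.BijOn π (G'.neighborSet w) (G.neighborSet (π w)))

lemma zmod2_cases (a : ZMod 2) : a = 0 ∨ a = 1 := by revert a; decide

lemma zmod2_val0 : (0 : ZMod 2).val = 0 := rfl
lemma zmod2_val1 : (1 : ZMod 2).val = 1 := rfl

lemma rowsum {r n M : ℕ} (H : Matrix (Fin r) (Fin n) (ZMod 2))
    (σ : Fin r → Fin n → Equiv.Perm (Fin M)) (c : Fin n × Fin M → ZMod 2)
    (hc : (matLift H σ).mulVec c = 0) (j : Fin r) (l : Fin M) :
    ∑ i, (if H j i = 1 then c (i, σ j i l) else 0) = 0 := by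
  have h := congrFun hc (j, l)
  simp only [Matrix.mulVec, dotProduct, matLift, Pi.zero_apply] at h
  rw [Fintype.sum_prod_type] at h
  refine Eq.trans ?_ h
  refine Finset.sum_congr rfl fun i _ => ?_
  refine Eq.symm ?_
  have e : ∀ k, (if H j i = 1 ∧ σ j i l = k then (1 : ZMod 2) else 0) * c (i, k)
      = if σ j i l = k then (if H j i = 1 then c (i, k) else 0) else 0 := by
    intro k
    by_cases h1 : H j i = 1 <;> by_cases h2 : σ j i l = k <;> simp [h1, h2]
  simp_rw [e]
  rw [Finset.sum_ite_eq]
  simp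

/-- an unscaled pseudo-codeword lies in the fundamental cone and its mod-2
reduction is a codeword. -/
theorem stmt3 {r n : ℕ} (H : Matrix (Fin r) (Fin n) (ZMod 2)) (p : Fin n → ℕ)
    (hp : IsUnscaledPseudoCodeword H p) :
    InFundCone H (fun i => (p i : ℝ)) ∧
      H.mulVec (fun i => (p i : ZMod 2)) = 0 := by
  obtain ⟨M, hM, σ, c, hc, hpc⟩ := hp
  have hrow := rowsum H σ c hc
  have hcol : ∀ i, (p i : ZMod 2) = ∑ k, c (i, k) := by
    intro i
    rw [hpc i, Finset.card_filter]
    push_cast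
    refine Finset.sum_congr rfl fun k _ => ?_
    rcases zmod2_cases (c (i, k)) with h | h <;> simp [h]
  constructor
  · constructor
    · intro i; positivity
    · intro j i
      rcases zmod2_cases (H j i) with h0 | h1
      · rw [h0]
        simp only [zmod2_val0, Nat.cast_zero, zero_mul]
        exact Finset.sum_nonneg fun i' _ => by positivity
      · have keyN : p i ≤ ∑ i' ∈ Finset.univ.erase i, (H j i').val * p i' := by
          classical
          set K : Finset (Fin M) := Finset.univ.filter (fun k => c (i, k) = 1) with hK
          set A : Finset (Fin n × Fin M) :=
            Finset.univ.filter (fun x => x.1 ≠ i ∧ H j x.1 = 1 ∧ c x = 1) with hA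
          have step1 : ∀ k, ∃ x : Fin n × Fin M, k ∈ K →
              (x.1 ≠ i ∧ H j x.1 = 1 ∧ c x = 1 ∧ x.2 = σ j x.1 ((σ j i)⁻¹ k)) := by
            intro k
            by_cases hk : k ∈ K
            · set l := (σ j i)⁻¹ k with hl
              have hr := hrow j l
              rw [← Finset.add_sum_erase _ _ (Finset.mem_univ i)] at hr
              have hsl : σ j i l = k := Equiv.apply_symm_apply _ _
              have hck : c (i, k) = 1 := by simpa [hK] using hk
              rw [if_pos h1, hsl, hck] at hr
              have hS : ∑ i' ∈ Finset.univ.erase i,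
                  (if H j i' = 1 then c (i', σ j i' l) else 0) ≠ 0 := by
                intro h
                rw [h, add_zero] at hr
                exact one_ne_zero hr
              obtain ⟨i', hi', hne⟩ := Finset.exists_ne_zero_of_sum_ne_zero hS
              have hH : H j i' = 1 := by
                by_contra hh
                rw [if_neg hh] at hne
                exact hne rfl
              rw [if_pos hH] at hne
              have hc' : c (i', σ j i' l) = 1 := by
                rcases zmod2_cases (c (i', σ j i' l)) with h | h
                · exact absurd h hne
                · exact h
              exact ⟨(i', σ j i' l), fun _ =>
                ⟨Finset.ne_of_mem_erase hi', hH, hc', rfl⟩⟩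
            · exact ⟨(i, (σ j i)⁻¹ k), fun h => absurd h hk⟩
          choose F hF using step1
          have hcard : K.card ≤ A.card := by
            apply Finset.card_le_card_of_injOn F
            · intro k hk
              obtain ⟨h1', h2', h3', _⟩ := hF k hk
              simp [hA, h1', h2', h3']
            · intro k1 hk1 k2 hk2 heq
              simp only [Finset.mem_coe] at hk1 hk2
              obtain ⟨_, _, _, e1⟩ := hF k1 hk1
              obtain ⟨_, _, _, e2⟩ := hF k2 hk2
              rw [heq] at e1
              have h' : σ j (F k2).1 ((σ j i)⁻¹ k1) = σ j (F k2).1 ((σ j i)⁻¹ k2) := by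
                rw [← e1, ← e2]
              exact (σ j i)⁻¹.injective ((σ j (F k2).1).injective h')
          have hAcard : A.card = ∑ i' ∈ Finset.univ.erase i, (H j i').val * p i' := by
            rw [hA, Finset.card_filter, Fintype.sum_prod_type]
            rw [← Finset.filter_ne' Finset.univ i, Finset.sum_filter]
            refine Finset.sum_congr rfl fun i' _ => ?_
            by_cases hne : i' = i
            · simp [hne]
            · rcases zmod2_cases (H j i') with h | h
              · have hz : ∀ k : Fin M, ¬(i' ≠ i ∧ H j i' = 1 ∧ c (i', k) = 1) := by
                  intro k hcon
                  rw [h] at hcon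
                  exact absurd hcon.2.1 (by decide)
                simp [hne, h, hz, zmod2_val0]
              · rw [hpc i', Finset.card_filter, if_pos hne, h, zmod2_val1, one_mul]
                refine Finset.sum_congr rfl fun k _ => ?_
                simp [hne, h]
          rw [hpc i, ← hAcard]
          exact hcard
        rw [h1]
        have hcast : ∑ i' ∈ Finset.univ.erase i, ((H j i').val : ℝ) * (p i' : ℝ)
            = ((∑ i' ∈ Finset.univ.erase i, (H j i').val * p i' : ℕ) : ℝ) := by
          push_cast; ring_nf
        rw [hcast]
        simp only [zmod2_val1, Nat.cast_one, one_mul]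
        exact_mod_cast keyN
  · funext j
    simp only [Matrix.mulVec, dotProduct, Pi.zero_apply]
    have key : ∑ l, ∑ i, (if H j i = 1 then c (i, σ j i l) else 0) = 0 := by
      simp [hrow j]
    rw [Finset.sum_comm] at key
    calc ∑ i, H j i * (p i : ZMod 2)
        = ∑ i, ∑ l, (if H j i = 1 then c (i, σ j i l) else 0) := by
          refine Finset.sum_congr rfl fun i _ => ?_
          rcases zmod2_cases (H j i) with h | h
          · simp [h]
          · rw [h, one_mul, hcol i]
            simp only [h, if_true]
            exact (Equiv.sum_comp (σ j i) (fun k => c (i, k))).symm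
      _ = 0 := key
end

section
/- Let M ≥ 1, let σ_{ji} be permutations of {1,…,M} for each pair (j,i) with h_{ji} = 1, let H̃ be the associated M-lift of H, and let c̃ ∈ F₂^{nM} satisfy H̃c̃ᵀ = 0 over F₂. Define p_i = #{k : c̃_{(i,k)} = 1} for each i. Then the normalized pseudo-codeword ω = (1/M)·(p₁,…,p_n) lies in the fundamental cone K(H). -/
open Finset

/-- every normalized pseudo-codeword lies in the fundamental cone. -/
theorem stmt5 {r n M : ℕ} (hM : 0 < M) (H : Matrix (Fin r) (Fin n) (ZMod 2))
    (σ : Fin r → Fin n → Equiv.Perm (Fin M)) (c : Fin n × Fin M → ZMod 2)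
    (hc : (matLift H σ).mulVec c = 0) (p : Fin n → ℕ)
    (hp : ∀ i, p i = (Finset.univ.filter (fun k : Fin M => c (i, k) = 1)).card) :
    InFundCone H (fun i => (p i : ℝ) / M) := by
  classical
  have h01 : ∀ x : ZMod 2, x = 0 ∨ x = 1 := by decide
  have key : ∀ (j : Fin r) (l : Fin M),
      (∑ i' : Fin n, (if H j i' = 1 then c (i', σ j i' l) else 0)) = (0 : ZMod 2) := by
    intro j l
    have h0 := congrFun hc (j, l)
    simp only [Matrix.mulVec, dotProduct, Pi.zero_apply, matLift, ite_mul,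
      one_mul, zero_mul] at h0
    rw [Fintype.sum_prod_type] at h0
    calc (∑ i' : Fin n, (if H j i' = 1 then c (i', σ j i' l) else 0))
        = ∑ i' : Fin n, ∑ k : Fin M,
            (if H j i' = 1 ∧ σ j i' l = k then c (i', k) else 0) := by
          refine Finset.sum_congr rfl fun i' _ => ?_
          by_cases hP : H j i' = 1 <;> simp [hP]
      _ = 0 := h0
  -- card of filter under permutation
  have hperm : ∀ (τ : Equiv.Perm (Fin M)) (i' : Fin n),
      (Finset.univ.filter fun l => c (i', τ l) = 1).card
        = (Finset.univ.filter fun k : Fin M => c (i', k) = 1).card := by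
    intro τ i'
    apply Finset.card_bij (fun l _ => τ l)
    · intro a ha; simp only [Finset.mem_filter, Finset.mem_univ, true_and] at ha ⊢; exact ha
    · intro a _ b _ hab; exact τ.injective hab
    · intro b hb
      refine ⟨τ.symm b, ?_, by simp⟩
      simp only [Finset.mem_filter, Finset.mem_univ, true_and] at hb ⊢
      simpa using hb
  constructor
  · intro i; positivity
  intro j i
  have hnat : (H j i).val * p i ≤ ∑ i' ∈ Finset.univ.erase i, (H j i').val * p i' := by
    rcases h01 (H j i) with hHi | hHi
    · simp [hHi]
    · rw [hHi]
      simp only [ZMod.val_one, one_mul]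
      set S : Finset (Fin M) := Finset.univ.filter (fun l => c (i, σ j i l) = 1) with hS
      set T : Fin n → Finset (Fin M) :=
        fun i' => Finset.univ.filter (fun l => H j i' = 1 ∧ c (i', σ j i' l) = 1) with hT
      have hpi : p i = S.card := by rw [hp i, hS, hperm (σ j i) i]
      have hsub : S ⊆ (Finset.univ.erase i).biUnion T := by
        intro l hl
        simp only [hS, Finset.mem_filter, Finset.mem_univ, true_and] at hl
        have hsum : (∑ i' ∈ Finset.univ.erase i,
            (if H j i' = 1 then c (i', σ j i' l) else 0)) = (1 : ZMod 2) := by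
          have := key j l
          rw [← Finset.add_sum_erase _ _ (Finset.mem_univ i), hHi, if_pos rfl, hl] at this
          have h2 : ∀ x : ZMod 2, 1 + x = 0 → x = 1 := by decide
          exact h2 _ this
        have hne : ∃ i' ∈ Finset.univ.erase i,
            (if H j i' = 1 then c (i', σ j i' l) else 0) ≠ (0 : ZMod 2) := by
          by_contra hcon
          push_neg at hcon
          rw [Finset.sum_eq_zero hcon] at hsum
          exact one_ne_zero hsum.symm
        obtain ⟨i', hi', hne'⟩ := hne
        rcases h01 (H j i') with h | h
        · simp [h] at hne'
        · rw [if_pos h] at hne'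
          rcases h01 (c (i', σ j i' l)) with hcc | hcc
          · exact absurd hcc hne'
          · exact Finset.mem_biUnion.2 ⟨i', hi', by
              simp only [hT, Finset.mem_filter, Finset.mem_univ, true_and]
              exact ⟨h, hcc⟩⟩
      have hTcard : ∀ i' : Fin n, (T i').card ≤ (H j i').val * p i' := by
        intro i'
        rcases h01 (H j i') with h | h
        · have : T i' = ∅ := by
            apply Finset.eq_empty_of_forall_notMem
            intro l hl
            simp only [hT, Finset.mem_filter] at hl
            rw [h] at hl
            exact absurd hl.2.1 (by decide)
          simp [this]
        · have : T i' = Finset.univ.filter (fun l => c (i', σ j i' l) = 1) := by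
            apply Finset.filter_congr
            intro l _
            simp [h]
          rw [this, h, ZMod.val_one, one_mul, hp i', hperm (σ j i') i']
      calc p i = S.card := hpi
        _ ≤ ((Finset.univ.erase i).biUnion T).card := Finset.card_le_card hsub
        _ ≤ ∑ i' ∈ Finset.univ.erase i, (T i').card := Finset.card_biUnion_le
        _ ≤ ∑ i' ∈ Finset.univ.erase i, (H j i').val * p i' :=
            Finset.sum_le_sum fun i' _ => hTcard i'
  have hM' : (0 : ℝ) < M := by exact_mod_cast hM
  simp only [mul_div_assoc']
  rw [← Finset.sum_div]
  apply div_le_div_of_nonneg_right ?_ hM'.le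
  exact_mod_cast hnat
end

section
/- Let ν = (ν₁,…,ν_n) ∈ K(H) and let β > 0 be a real number. Define the integer vector p = (p₁,…,p_n) by p_i = 2⌈β ν_i⌉. Then p ∈ K(H), every entry of p is a nonnegative even integer, and Hpᵀ = 0 over F₂. -/
open Finset

lemma ceil_sum_le' {ι : Type*} (s : Finset ι) (f : ι → ℝ) :
    ⌈∑ i ∈ s, f i⌉ ≤ ∑ i ∈ s, ⌈f i⌉ := by
  classical
  induction s using Finset.induction with
  | empty => simp
  | @insert a s hx ih =>
    rw [Finset.sum_insert hx, Finset.sum_insert hx]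
    exact le_trans (Int.ceil_add_le _ _) (by omega)

/-- for `ν` in the fundamental cone and `β > 0`, the vector `p` with
`p i = 2⌈β ν i⌉` lies in the fundamental cone, has nonnegative even entries, and reduces
to a codeword mod 2. -/
theorem stmt7 {r n : ℕ} (H : Matrix (Fin r) (Fin n) (ZMod 2))
    (ν : Fin n → ℝ) (hν : InFundCone H ν) (β : ℝ) (hβ : 0 < β)
    (p : Fin n → ℤ) (hp : ∀ i, p i = 2 * ⌈β * ν i⌉) :
    InFundCone H (fun i => (p i : ℝ)) ∧
    (∀ i, 0 ≤ p i ∧ Even (p i)) ∧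
    H.mulVec (fun i => (p i : ZMod 2)) = 0 := by
  have hval : ∀ (j : Fin r) (i : Fin n), (H j i).val = 0 ∨ (H j i).val = 1 := by
    intro j i
    have := (H j i).val_lt
    omega
  have hpnn : ∀ i, 0 ≤ p i := by
    intro i
    rw [hp i]
    have : (0:ℤ) ≤ ⌈β * ν i⌉ := Int.ceil_nonneg (mul_nonneg hβ.le (hν.1 i))
    omega
  refine ⟨⟨fun i => by simpa using (Int.cast_nonneg_iff (R := ℝ)).mpr (hpnn i), ?_⟩, fun i => ⟨hpnn i, ⟨⌈β * ν i⌉, by rw [hp i]; ring⟩⟩, ?_⟩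
  · intro j i
    rcases hval j i with h0 | h1
    · rw [h0]
      simp only [Nat.cast_zero, zero_mul]
      refine Finset.sum_nonneg fun i' _ => mul_nonneg (by positivity) ?_
      exact_mod_cast hpnn i'
    · -- key case
      have key : (⌈β * ν i⌉ : ℤ) ≤ ∑ i' ∈ Finset.univ.erase i, ((H j i').val : ℤ) * ⌈β * ν i'⌉ := by
        have h2 : β * ν i ≤ ∑ i' ∈ Finset.univ.erase i, ((H j i').val : ℝ) * (β * ν i') := by
          have := hν.2 j i
          rw [h1] at this
          simp only [Nat.cast_one, one_mul] at this
          calc β * ν i ≤ β * ∑ i' ∈ Finset.univ.erase i, ((H j i').val : ℝ) * ν i' :=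
                mul_le_mul_of_nonneg_left this hβ.le
            _ = _ := by rw [Finset.mul_sum]; apply Finset.sum_congr rfl; intros; ring
        have h3 : ⌈β * ν i⌉ ≤ ⌈∑ i' ∈ Finset.univ.erase i, ((H j i').val : ℝ) * (β * ν i')⌉ :=
          Int.ceil_le_ceil h2
        refine h3.trans ((ceil_sum_le' _ _).trans (Finset.sum_le_sum fun i' _ => ?_))
        rcases hval j i' with h0' | h1'
        · simp [h0']
        · simp [h1']
      have : (2 * ⌈β * ν i⌉ : ℤ) ≤ ∑ i' ∈ Finset.univ.erase i, ((H j i').val : ℤ) * (2 * ⌈β * ν i'⌉) := by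
        have := mul_le_mul_of_nonneg_left key (by norm_num : (0:ℤ) ≤ 2)
        rw [Finset.mul_sum] at this
        refine this.trans_eq (Finset.sum_congr rfl fun i' _ => by ring)
      have final : ((2 * ⌈β * ν i⌉ : ℤ) : ℝ) ≤
          ((∑ i' ∈ Finset.univ.erase i, ((H j i').val : ℤ) * (2 * ⌈β * ν i'⌉) : ℤ) : ℝ) := by
        exact_mod_cast this
      rw [h1]
      simp only [Nat.cast_one, one_mul]
      rw [hp i]
      push_cast at final ⊢
      refine final.trans_eq (Finset.sum_congr rfl fun i' _ => ?_)
      rw [hp i']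
      push_cast
      ring
  · have hz : (fun i => ((p i : ZMod 2))) = 0 := by
      funext i
      rw [hp i]
      push_cast
      simp [show ((2:ZMod 2)) = 0 by decide]
    rw [hz, Matrix.mulVec_zero]
end

section
/- Suppose every column of H contains exactly two 1's, in distinct rows (so C is a cycle code), and let ζ_N = (det(I − UM))⁻¹ ∈ ℤ[[u₁,…,u_n]] be the edge zeta function of the normal graph N of H, defined via the directed edge matrix M as in the context. Then the Newton polyhedron of ζ_N — the convex cone in ℝⁿ generated by the exponent vectors (p₁,…,p_n) of the monomials u₁^{p₁}···u_n^{p_n} appearing with nonzero coefficient in the power series ζ_N — is exactly the fundamental cone K(H). -/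
open Finset

/-- The matrix `UM` for the normal graph of a cycle code (see statement 9). -/
noncomputable def normalGraphUM {r n : ℕ} (j₁ j₂ : Fin n → Fin r) :
    Matrix (Fin n × Bool) (Fin n × Bool) (MvPowerSeries (Fin n) ℤ) :=
  fun d d' =>
    if (if d.2 then j₂ d.1 else j₁ d.1) = (if d'.2 then j₁ d'.1 else j₂ d'.1) ∧
        d' ≠ (d.1, !d.2)
    then MvPowerSeries.X d.1 else 0


namespace Stmt10Aux
noncomputable section
variable {n : ℕ}

def mvec : Option (Fin n) → (Fin n →₀ ℕ)
  | none => 0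
  | some i => Finsupp.single i 1

def deg (q : Fin n →₀ ℕ) : ℕ := ∑ i, q i

lemma deg_add (a b : Fin n →₀ ℕ) : deg (a + b) = deg a + deg b := by
  simp [deg, Finsupp.add_apply, Finset.sum_add_distrib]

def matOf {m : ℕ} (f : Fin m → Fin m → Option (Fin n)) :
    Matrix (Fin m) (Fin m) (MvPowerSeries (Fin n) ℤ) :=
  fun d d' => (f d d').elim 0 MvPowerSeries.X

lemma coeff_matOf {m : ℕ} (f : Fin m → Fin m → Option (Fin n)) (d d' : Fin m) (q : Fin n →₀ ℕ) :
    MvPowerSeries.coeff q (matOf f d d') =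
      if (f d d').isSome ∧ q = mvec (f d d') then 1 else 0 := by
  rcases h : f d d' with _ | i
  · simp [matOf, h]
  · simp [matOf, h, mvec, MvPowerSeries.coeff_X]

lemma deg_mvec_some (i : Fin n) : deg (mvec (some i)) = 1 := by
  simp [deg, mvec, Finsupp.single_apply]

lemma coeff_matOf_ne_zero {m : ℕ} {f : Fin m → Fin m → Option (Fin n)} {d d' : Fin m}
    {q : Fin n →₀ ℕ} (h : MvPowerSeries.coeff q (matOf f d d') ≠ 0) :
    (f d d').isSome ∧ q = mvec (f d d') ∧ deg q = 1 := by
  rw [coeff_matOf] at h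
  split_ifs at h with hc
  · rcases hc with ⟨hs, hq⟩
    refine ⟨hs, hq, ?_⟩
    rcases Option.isSome_iff_exists.mp hs with ⟨i, hi⟩
    rw [hq, hi, deg_mvec_some]
  · exact absurd rfl h

/-- coefficients of entries of `A^k` vanish below degree `k` -/
lemma coeff_pow_eq_zero {m : ℕ} (f : Fin m → Fin m → Option (Fin n)) :
    ∀ (k : ℕ) (q : Fin n →₀ ℕ), deg q < k → ∀ d d' : Fin m,
      MvPowerSeries.coeff q ((matOf f ^ k) d d') = 0 := by
  intro k
  induction k with
  | zero => intro q hq; omega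
  | succ k ih =>
    intro q hq d d'
    rw [pow_succ']
    rw [Matrix.mul_apply, map_sum]
    refine Finset.sum_eq_zero fun e _ => ?_
    rw [MvPowerSeries.coeff_mul]
    refine Finset.sum_eq_zero fun ab hab => ?_
    by_cases h : MvPowerSeries.coeff ab.1 (matOf f d e) = 0
    · rw [h, zero_mul]
    · obtain ⟨-, -, hdeg⟩ := coeff_matOf_ne_zero h
      have hsum : deg ab.1 + deg ab.2 = deg q := by
        rw [← deg_add, Finset.HasAntidiagonal.mem_antidiagonal.mp hab]
      have : deg ab.2 < k := by omega
      rw [ih ab.2 this e d', mul_zero]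

/-- the walk generating matrix: `(gMat f) d d' = ∑_k (A^k) d d'`, coefficientwise -/
def gMat {m : ℕ} (f : Fin m → Fin m → Option (Fin n)) : Matrix (Fin m) (Fin m) (MvPowerSeries (Fin n) ℤ) :=
  fun d d' => (fun q => ∑ k ∈ range (deg q + 1), MvPowerSeries.coeff q ((matOf f ^ k) d d') :
    MvPowerSeries (Fin n) ℤ)

lemma coeff_gMat {m : ℕ} (f : Fin m → Fin m → Option (Fin n)) (d d' : Fin m) (q : Fin n →₀ ℕ) :
    MvPowerSeries.coeff q (gMat f d d') =
      ∑ k ∈ range (deg q + 1), MvPowerSeries.coeff q ((matOf f ^ k) d d') := rfl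

lemma coeff_gMat' {m : ℕ} (f : Fin m → Fin m → Option (Fin n)) (d d' : Fin m) (q : Fin n →₀ ℕ)
    {K : ℕ} (hK : deg q < K) :
    MvPowerSeries.coeff q (gMat f d d') =
      ∑ k ∈ range K, MvPowerSeries.coeff q ((matOf f ^ k) d d') := by
  rw [coeff_gMat]
  apply Finset.sum_subset
  · intro x hx; simp only [mem_range] at *; omega
  · intro x hx hx'
    simp only [mem_range] at hx hx'
    exact coeff_pow_eq_zero f x q (by omega) d d'

-- KEY identity
lemma one_sub_mul_gMat {m : ℕ} (f : Fin m → Fin m → Option (Fin n)) :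
    (1 - matOf f) * gMat f = 1 := by
  ext d d' q : 3
  rw [Matrix.mul_apply]
  have expand : ∀ e, (1 - matOf f) d e * gMat f e d'
      = (1 : Matrix (Fin m) (Fin m) (MvPowerSeries (Fin n) ℤ)) d e * gMat f e d'
        - matOf f d e * gMat f e d' := by
    intro e; rw [Matrix.sub_apply, sub_mul]
  simp only [expand]
  rw [Finset.sum_sub_distrib, map_sub]
  -- first sum collapses
  have h1 : ∑ e, (1 : Matrix (Fin m) (Fin m) (MvPowerSeries (Fin n) ℤ)) d e * gMat f e d'
      = gMat f d d' := by
    simp [Matrix.one_apply, ite_mul]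
  rw [h1]
  -- second sum
  have h2 : MvPowerSeries.coeff q (∑ e, matOf f d e * gMat f e d')
      = ∑ k ∈ range (deg q), MvPowerSeries.coeff q ((matOf f ^ (k+1)) d d') := by
    rw [map_sum]
    have step1 : ∀ e, MvPowerSeries.coeff q (matOf f d e * gMat f e d')
        = ∑ ab ∈ antidiagonal q, MvPowerSeries.coeff ab.1 (matOf f d e)
            * ∑ k ∈ range (deg q), MvPowerSeries.coeff ab.2 ((matOf f ^ k) e d') := by
      intro e
      rw [MvPowerSeries.coeff_mul]
      refine Finset.sum_congr rfl fun ab hab => ?_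
      by_cases h : MvPowerSeries.coeff ab.1 (matOf f d e) = 0
      · rw [h, zero_mul, zero_mul]
      · obtain ⟨-, -, hdeg⟩ := coeff_matOf_ne_zero h
        have hsum : deg ab.1 + deg ab.2 = deg q := by
          rw [← deg_add, Finset.HasAntidiagonal.mem_antidiagonal.mp hab]
        congr 1
        rw [coeff_gMat' f e d' ab.2 (K := deg q) (by omega)]
    simp only [step1, Finset.mul_sum]
    have swap1 : ∀ e : Fin m, ∑ ab ∈ antidiagonal q, ∑ k ∈ range (deg q),
        MvPowerSeries.coeff ab.1 (matOf f d e) * MvPowerSeries.coeff ab.2 ((matOf f ^ k) e d')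
        = ∑ k ∈ range (deg q), ∑ ab ∈ antidiagonal q,
        MvPowerSeries.coeff ab.1 (matOf f d e) * MvPowerSeries.coeff ab.2 ((matOf f ^ k) e d') :=
      fun e => Finset.sum_comm
    simp only [swap1]
    rw [Finset.sum_comm]
    refine Finset.sum_congr rfl fun k _ => ?_
    have : ∀ e, ∑ ab ∈ antidiagonal q, MvPowerSeries.coeff ab.1 (matOf f d e)
        * MvPowerSeries.coeff ab.2 ((matOf f ^ k) e d')
        = MvPowerSeries.coeff q (matOf f d e * (matOf f ^ k) e d') := by
      intro e; rw [MvPowerSeries.coeff_mul]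
    simp only [this]
    rw [← map_sum, pow_succ', Matrix.mul_apply]
  rw [h2, coeff_gMat, Finset.sum_range_succ']
  simp only [pow_zero]
  ring
def zetaOf {m : ℕ} (f : Fin m → Fin m → Option (Fin n)) : MvPowerSeries (Fin n) ℤ :=
  Ring.inverse (Matrix.det (1 - matOf f))

lemma isUnit_detOf {m : ℕ} (f : Fin m → Fin m → Option (Fin n)) :
    IsUnit (Matrix.det (1 - matOf f)) := by
  have := congrArg Matrix.det (one_sub_mul_gMat f)
  rw [Matrix.det_mul, Matrix.det_one] at this
  exact IsUnit.of_mul_eq_one _ this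

lemma detOf_mul_zetaOf {m : ℕ} (f : Fin m → Fin m → Option (Fin n)) :
    Matrix.det (1 - matOf f) * zetaOf f = 1 :=
  Ring.mul_inverse_cancel _ (isUnit_detOf f)

lemma constantCoeff_detOf {m : ℕ} (f : Fin m → Fin m → Option (Fin n)) :
    (MvPowerSeries.constantCoeff (σ := Fin n) (R := ℤ)) (Matrix.det (1 - matOf f)) = 1 := by
  rw [RingHom.map_det]
  have : ((MvPowerSeries.constantCoeff (σ := Fin n) (R := ℤ))).mapMatrix (1 - matOf f) = 1 := by
    ext d d'
    simp only [RingHom.mapMatrix_apply, Matrix.map_apply, Matrix.sub_apply, map_sub]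
    have hA : (MvPowerSeries.constantCoeff (σ := Fin n) (R := ℤ)) (matOf f d d') = 0 := by
      rcases h : f d d' with _ | i
      · simp [matOf, h]
      · simp [matOf, h]
    rw [hA, sub_zero]
    rcases eq_or_ne d d' with rfl | hne
    · simp [Matrix.one_apply]
    · simp [Matrix.one_apply, hne]
  rw [this, Matrix.det_one]

lemma constantCoeff_zetaOf {m : ℕ} (f : Fin m → Fin m → Option (Fin n)) :
    (MvPowerSeries.constantCoeff (σ := Fin n) (R := ℤ)) (zetaOf f) = 1 := by
  have h := congrArg ((MvPowerSeries.constantCoeff (σ := Fin n) (R := ℤ))) (detOf_mul_zetaOf f)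
  rw [map_mul, constantCoeff_detOf, one_mul, map_one] at h
  exact h

/-- restriction of the transition structure -/
def fres {m : ℕ} (f : Fin (m+1) → Fin (m+1) → Option (Fin n)) : Fin m → Fin m → Option (Fin n) :=
  fun a b => f a.succ b.succ

lemma det_minor {m : ℕ} (f : Fin (m+1) → Fin (m+1) → Option (Fin n)) :
    Matrix.det (1 - matOf f) * gMat f 0 0 = Matrix.det (1 - matOf (fres f)) := by
  have hadj : (1 - matOf f).adjugate = Matrix.det (1 - matOf f) • gMat f := by
    calc (1 - matOf f).adjugate = (1 - matOf f).adjugate * ((1 - matOf f) * gMat f) := by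
          rw [one_sub_mul_gMat, mul_one]
      _ = ((1 - matOf f).adjugate * (1 - matOf f)) * gMat f := by rw [mul_assoc]
      _ = (Matrix.det (1 - matOf f) • 1) * gMat f := by rw [Matrix.adjugate_mul]
      _ = Matrix.det (1 - matOf f) • gMat f := by rw [Matrix.smul_mul, one_mul]
  have h00 := congrFun (congrFun hadj 0) 0
  simp only [Matrix.smul_apply, smul_eq_mul] at h00
  rw [← h00]
  rw [Matrix.adjugate_apply, Matrix.det_succ_row_zero]
  rw [Fin.sum_univ_succ]
  have tail0 : ∀ i : Fin m,
      (-1 : MvPowerSeries (Fin n) ℤ) ^ ((i.succ : Fin (m+1)) : ℕ)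
        * ((1 - matOf f).updateRow 0 (Pi.single 0 1)) 0 i.succ
        * (((1 - matOf f).updateRow 0 (Pi.single 0 1)).submatrix Fin.succ i.succ.succAbove).det
        = 0 := by
    intro i
    have : ((1 - matOf f).updateRow 0 (Pi.single 0 1)) 0 i.succ = 0 := by
      rw [Matrix.updateRow_self]
      exact Pi.single_eq_of_ne (Fin.succ_ne_zero i) 1
    rw [this, mul_zero, zero_mul]
  simp only [tail0, Finset.sum_const_zero, add_zero]
  simp only [Matrix.updateRow_self, Fin.val_zero, pow_zero, one_mul]
  have hrow : (Pi.single (0 : Fin (m+1)) (1 : MvPowerSeries (Fin n) ℤ) :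
      Fin (m+1) → MvPowerSeries (Fin n) ℤ) 0 = 1 := by simp
  rw [hrow, one_mul, Fin.succAbove_zero]
  have hsub : ((1 - matOf f).updateRow 0 (Pi.single 0 1)).submatrix Fin.succ Fin.succ
      = 1 - matOf (fres f) := by
    ext a b : 2
    rw [Matrix.submatrix_apply, Matrix.updateRow_ne (Fin.succ_ne_zero a)]
    simp only [Matrix.sub_apply]
    have h1 : (1 : Matrix (Fin (m+1)) (Fin (m+1)) (MvPowerSeries (Fin n) ℤ)) a.succ b.succ
        = (1 : Matrix (Fin m) (Fin m) (MvPowerSeries (Fin n) ℤ)) a b := by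
      rw [Matrix.one_apply, Matrix.one_apply]
      simp [Fin.succ_inj]
    have h2 : matOf f a.succ b.succ = matOf (fres f) a b := rfl
    rw [h1, h2]
  rw [hsub]

lemma zeta_factor {m : ℕ} (f : Fin (m+1) → Fin (m+1) → Option (Fin n)) :
    zetaOf f = gMat f 0 0 * zetaOf (fres f) := by
  have h1 := detOf_mul_zetaOf f
  have h2 := detOf_mul_zetaOf (fres f)
  have h3 := det_minor f
  calc zetaOf f = (Matrix.det (1 - matOf (fres f)) * zetaOf (fres f)) * zetaOf f := by
        rw [h2, one_mul]
    _ = (Matrix.det (1 - matOf f) * zetaOf f) * (gMat f 0 0 * zetaOf (fres f)) := by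
        rw [← h3]; ring
    _ = gMat f 0 0 * zetaOf (fres f) := by rw [h1, one_mul]
/-! ## nonnegativity -/

def NN (φ : MvPowerSeries (Fin n) ℤ) : Prop := ∀ q, 0 ≤ MvPowerSeries.coeff q φ

lemma NN_one : NN (1 : MvPowerSeries (Fin n) ℤ) := by
  intro q; rw [MvPowerSeries.coeff_one]; positivity

lemma NN_mul {φ ψ : MvPowerSeries (Fin n) ℤ} (hφ : NN φ) (hψ : NN ψ) : NN (φ * ψ) := by
  intro q
  rw [MvPowerSeries.coeff_mul]
  exact Finset.sum_nonneg fun ab _ => mul_nonneg (hφ _) (hψ _)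

lemma NN_matOf {m : ℕ} (f : Fin m → Fin m → Option (Fin n)) (d d' : Fin m) : NN (matOf f d d') := by
  intro q; rw [coeff_matOf]; positivity

lemma NN_one_matrix {m : ℕ} (d d' : Fin m) :
    NN ((1 : Matrix (Fin m) (Fin m) (MvPowerSeries (Fin n) ℤ)) d d') := by
  intro q
  rw [Matrix.one_apply]
  split_ifs
  · exact NN_one q
  · simp

lemma NN_matOf_pow {m : ℕ} (f : Fin m → Fin m → Option (Fin n)) (k : ℕ) (d d' : Fin m) :
    NN ((matOf f ^ k) d d') := by
  induction k generalizing d d' with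
  | zero => rw [pow_zero]; exact NN_one_matrix d d'
  | succ k ih =>
    rw [pow_succ', Matrix.mul_apply]
    intro q
    rw [map_sum]
    exact Finset.sum_nonneg fun e _ => NN_mul (NN_matOf f d e) (ih e d') q

lemma NN_gMat {m : ℕ} (f : Fin m → Fin m → Option (Fin n)) (d d' : Fin m) : NN (gMat f d d') := by
  intro q
  rw [coeff_gMat]
  exact Finset.sum_nonneg fun k _ => NN_matOf_pow f k d d' q

lemma NN_zetaOf : ∀ {m : ℕ} (f : Fin m → Fin m → Option (Fin n)), NN (zetaOf f) := by
  intro m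
  induction m with
  | zero =>
    intro f
    have : zetaOf f = 1 := by
      rw [zetaOf, Matrix.det_fin_zero, Ring.inverse_one]
    rw [this]; exact NN_one
  | succ m ih =>
    intro f
    rw [zeta_factor]
    exact NN_mul (NN_gMat f 0 0) (ih (fres f))

lemma coeff_le_mul {φ ψ : MvPowerSeries (Fin n) ℤ} (hφ : NN φ) (hψ : NN ψ) (a b : Fin n →₀ ℕ) :
    MvPowerSeries.coeff a φ * MvPowerSeries.coeff b ψ
      ≤ MvPowerSeries.coeff (a + b) (φ * ψ) := by
  rw [MvPowerSeries.coeff_mul]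
  have hmem : (a, b) ∈ antidiagonal (a + b) := by rw [Finset.HasAntidiagonal.mem_antidiagonal]
  exact Finset.single_le_sum (f := fun ab => MvPowerSeries.coeff ab.1 φ * MvPowerSeries.coeff ab.2 ψ)
    (fun ab _ => mul_nonneg (hφ _) (hψ _)) hmem

/-! ## walks -/

def tvec {m : ℕ} (f : Fin m → Fin m → Option (Fin n)) (w : ℕ → Fin m) (L : ℕ) : Fin n →₀ ℕ :=
  ∑ k ∈ range L, mvec (f (w k) (w (k+1)))

def IsCWV {m : ℕ} (f : Fin m → Fin m → Option (Fin n)) (q : Fin n →₀ ℕ) : Prop :=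
  ∃ (L : ℕ) (w : ℕ → Fin m), 0 < L ∧ w L = w 0 ∧
    (∀ k < L, (f (w k) (w (k+1))).isSome) ∧ q = tvec f w L

lemma deg_tvec {m : ℕ} (f : Fin m → Fin m → Option (Fin n)) (w : ℕ → Fin m) (L : ℕ)
    (h : ∀ k < L, (f (w k) (w (k+1))).isSome) : deg (tvec f w L) = L := by
  unfold tvec deg
  have happ : ∀ i : Fin n, (∑ k ∈ range L, mvec (f (w k) (w (k+1)))) i
      = ∑ k ∈ range L, (mvec (f (w k) (w (k+1)))) i := fun i => by
    rw [Finsupp.finset_sum_apply]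
  simp only [happ]
  rw [Finset.sum_comm]
  have hone : ∀ k ∈ range L, ∑ i, (mvec (f (w k) (w (k+1)))) i = 1 := by
    intro k hk
    rcases Option.isSome_iff_exists.mp (h k (mem_range.mp hk)) with ⟨i, hi⟩
    rw [hi]
    simpa [deg] using deg_mvec_some i
  rw [Finset.sum_congr rfl hone, Finset.sum_const, card_range, smul_eq_mul, mul_one]

lemma path_coeff {m : ℕ} (f : Fin m → Fin m → Option (Fin n)) (w : ℕ → Fin m) (L : ℕ)
    (h : ∀ k < L, (f (w k) (w (k+1))).isSome) :
    1 ≤ MvPowerSeries.coeff (tvec f w L) ((matOf f ^ L) (w 0) (w L)) := by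
  induction L with
  | zero =>
    have : tvec f w 0 = 0 := by simp [tvec]
    rw [this, pow_zero, Matrix.one_apply_eq, MvPowerSeries.coeff_one]
    simp
  | succ L ih =>
    have hstep : tvec f w (L+1) = tvec f w L + mvec (f (w L) (w (L+1))) := by
      rw [tvec, Finset.sum_range_succ]; rfl
    rw [hstep, pow_succ, Matrix.mul_apply, map_sum]
    have hterm : (1:ℤ) ≤ MvPowerSeries.coeff (tvec f w L + mvec (f (w L) (w (L+1))))
        ((matOf f ^ L) (w 0) (w L) * matOf f (w L) (w (L+1))) := by
      calc (1:ℤ) = 1 * 1 := by ring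
        _ ≤ MvPowerSeries.coeff (tvec f w L) ((matOf f ^ L) (w 0) (w L))
            * MvPowerSeries.coeff (mvec (f (w L) (w (L+1)))) (matOf f (w L) (w (L+1))) := by
            have h2 : MvPowerSeries.coeff (mvec (f (w L) (w (L+1)))) (matOf f (w L) (w (L+1))) = 1 := by
              rw [coeff_matOf]
              rw [if_pos ⟨h L (by omega), rfl⟩]
            rw [h2, mul_one, mul_one]
            exact ih (fun k hk => h k (by omega))
        _ ≤ _ := coeff_le_mul (NN_matOf_pow f L _ _) (NN_matOf f _ _) _ _
    refine hterm.trans ?_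
    exact Finset.single_le_sum (f := fun e => MvPowerSeries.coeff
        (tvec f w L + mvec (f (w L) (w (L+1)))) ((matOf f ^ L) (w 0) e * matOf f e (w (L+1))))
      (fun e _ => NN_mul (NN_matOf_pow f L _ _) (NN_matOf f _ _) _) (mem_univ (w L))

lemma pow_support {m : ℕ} (f : Fin m → Fin m → Option (Fin n)) :
    ∀ (L : ℕ) (q : Fin n →₀ ℕ) (d d' : Fin m),
    MvPowerSeries.coeff q ((matOf f ^ L) d d') ≠ 0 →
    ∃ w : ℕ → Fin m, w 0 = d ∧ w L = d' ∧ (∀ k < L, (f (w k) (w (k+1))).isSome) ∧ q = tvec f w L := by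
  intro L
  induction L with
  | zero =>
    intro q d d' hne
    rw [pow_zero, Matrix.one_apply] at hne
    split_ifs at hne with hd
    · rw [MvPowerSeries.coeff_one] at hne
      split_ifs at hne with hq
      · exact ⟨fun _ => d, rfl, hd ▸ rfl, by omega, by simp [hq, tvec]⟩
      · exact absurd rfl hne
    · simp at hne
  | succ L ih =>
    intro q d d' hne
    rw [pow_succ', Matrix.mul_apply, map_sum] at hne
    obtain ⟨e, -, he⟩ := Finset.exists_ne_zero_of_sum_ne_zero hne
    rw [MvPowerSeries.coeff_mul] at he
    obtain ⟨ab, hab, habne⟩ := Finset.exists_ne_zero_of_sum_ne_zero he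
    have h1 : MvPowerSeries.coeff ab.1 (matOf f d e) ≠ 0 := fun h => habne (by rw [h, zero_mul])
    have h2 : MvPowerSeries.coeff ab.2 ((matOf f ^ L) e d') ≠ 0 := fun h => habne (by rw [h, mul_zero])
    rw [coeff_matOf] at h1
    have h1' : (f d e).isSome ∧ ab.1 = mvec (f d e) := by
      by_contra hcon; rw [if_neg hcon] at h1; exact h1 rfl
    obtain ⟨w', hw0, hwL, htrans, htv⟩ := ih ab.2 e d' h2
    refine ⟨fun k => if k = 0 then d else w' (k-1), by simp, ?_, ?_, ?_⟩
    · simp [hwL]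
    · intro k hk
      rcases Nat.eq_zero_or_pos k with rfl | hkpos
      · simpa [hw0] using h1'.1
      · have : k ≠ 0 := by omega
        simp only [this, if_false, Nat.add_sub_cancel]
        have : k - 1 + 1 = k := by omega
        have hne0 : k + 1 ≠ 0 := by omega
        simp only [hne0, if_false]
        have h3 := htrans (k-1) (by omega)
        rw [this] at h3
        exact h3
    · have : q = ab.1 + ab.2 := (Finset.HasAntidiagonal.mem_antidiagonal.mp hab).symm
      rw [this, h1'.2, htv]
      rw [tvec, tvec, Finset.sum_range_succ']
      have heq : ∀ k ∈ range L, mvec (f (w' k) (w' (k+1)))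
          = mvec (f ((fun k => if k = 0 then d else w' (k-1)) (k+1))
                    ((fun k => if k = 0 then d else w' (k-1)) (k+2))) := by
        intro k _
        simp only [Nat.succ_ne_zero, if_false, Nat.add_sub_cancel]
        have h5 : k + 2 - 1 = k + 1 := by omega
        rw [h5]
      rw [Finset.sum_congr rfl heq]
      simp only [if_pos rfl, if_neg (Nat.one_ne_zero), hw0]
      rw [add_comm]
      rfl
  
/-! ## conjugation -/

lemma zetaOf_conj {m : ℕ} (f : Fin m → Fin m → Option (Fin n)) (σ : Equiv.Perm (Fin m)) :
    zetaOf (fun a b => f (σ a) (σ b)) = zetaOf f := by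
  unfold zetaOf
  congr 1
  have hsub : matOf (fun a b => f (σ a) (σ b)) = (matOf f).submatrix σ σ := rfl
  rw [hsub]
  have h1 : (1 : Matrix (Fin m) (Fin m) (MvPowerSeries (Fin n) ℤ)) - (matOf f).submatrix σ σ
      = (1 - matOf f).submatrix σ σ := by
    ext a b : 2
    simp only [Matrix.sub_apply, Matrix.submatrix_apply]
    congr 1
    rw [Matrix.one_apply, Matrix.one_apply]
    simp [EmbeddingLike.apply_eq_iff_eq]
  rw [h1, Matrix.det_submatrix_equiv_self]

lemma coeff_zeta_pos {m : ℕ} (f : Fin m → Fin m → Option (Fin n)) (q : Fin n →₀ ℕ)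
    (h : IsCWV f q) : 0 < MvPowerSeries.coeff q (zetaOf f) := by
  obtain ⟨L, w, hL, hclosed, htrans, rfl⟩ := h
  cases m with
  | zero => exact (w 0).elim0
  | succ m =>
    set σ : Equiv.Perm (Fin (m+1)) := Equiv.swap 0 (w 0) with hσ
    set g : Fin (m+1) → Fin (m+1) → Option (Fin n) := fun a b => f (σ a) (σ b) with hg
    set w' : ℕ → Fin (m+1) := fun k => σ.symm (w k) with hw'
    have happ : ∀ k, σ (w' k) = w k := fun k => σ.apply_symm_apply (w k)
    have htrans' : ∀ k < L, (g (w' k) (w' (k+1))).isSome := by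
      intro k hk
      have : g (w' k) (w' (k+1)) = f (w k) (w (k+1)) := by rw [hg]; simp only [happ]
      rw [this]; exact htrans k hk
    have htv : tvec g w' L = tvec f w L := by
      unfold tvec
      refine Finset.sum_congr rfl fun k _ => ?_
      congr 1
      show f (σ (w' k)) (σ (w' (k+1))) = _
      simp only [happ]
    have hw'0 : w' 0 = 0 := by
      rw [hw']
      simp only [Equiv.symm_swap]
      exact Equiv.swap_apply_right 0 (w 0)
    have hw'L : w' L = 0 := by
      show σ.symm (w L) = 0
      rw [hclosed]; exact hw'0
    rw [← zetaOf_conj f σ, ← hg, ← htv]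
    rw [zeta_factor]
    have key : (1:ℤ) * 1 ≤ MvPowerSeries.coeff (tvec g w' L + 0) (gMat g 0 0 * zetaOf (fres g)) := by
      refine le_trans ?_ (coeff_le_mul (NN_gMat g 0 0) (NN_zetaOf (fres g)) _ _)
      have hz : MvPowerSeries.coeff 0 (zetaOf (fres g)) = 1 := by
        rw [MvPowerSeries.coeff_zero_eq_constantCoeff]
        exact constantCoeff_zetaOf (fres g)
      rw [hz]
      have hG : 1 ≤ MvPowerSeries.coeff (tvec g w' L) (gMat g 0 0) := by
        rw [coeff_gMat]
        have hmem : L ∈ range (deg (tvec g w' L) + 1) := by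
          rw [deg_tvec g w' L htrans']; exact mem_range.mpr (by omega)
        have := path_coeff g w' L htrans'
        rw [hw'0, hw'L] at this
        calc (1:ℤ) ≤ _ := this
          _ ≤ _ := Finset.single_le_sum
              (f := fun k => MvPowerSeries.coeff (tvec g w' L) ((matOf g ^ k) 0 0))
              (fun k _ => NN_matOf_pow g k 0 0 _) hmem
      exact mul_le_mul hG le_rfl zero_le_one (by positivity)
    rw [add_zero] at key
    calc (0:ℤ) < 1 * 1 := by norm_num
      _ ≤ _ := key

/-! ## support -/

lemma WSet_fres_subset {m : ℕ} (f : Fin (m+1) → Fin (m+1) → Option (Fin n)) (q : Fin n →₀ ℕ)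
    (h : IsCWV (fres f) q) : IsCWV f q := by
  obtain ⟨L, w, hL, hclosed, htrans, rfl⟩ := h
  refine ⟨L, fun k => (w k).succ, hL, by show (w L).succ = (w 0).succ; rw [hclosed],
    fun k hk => htrans k hk, rfl⟩

lemma support_zeta : ∀ {m : ℕ} (f : Fin m → Fin m → Option (Fin n)) (q : Fin n →₀ ℕ),
    MvPowerSeries.coeff q (zetaOf f) ≠ 0 → q ∈ AddSubmonoid.closure {q' | IsCWV f q'} := by
  intro m
  induction m with
  | zero =>
    intro f q h
    have : zetaOf f = 1 := by rw [zetaOf, Matrix.det_fin_zero, Ring.inverse_one]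
    rw [this, MvPowerSeries.coeff_one] at h
    split_ifs at h with hq
    · rw [hq]; exact AddSubmonoid.zero_mem _
    · exact absurd rfl h
  | succ m ih =>
    intro f q h
    rw [zeta_factor, MvPowerSeries.coeff_mul] at h
    obtain ⟨ab, hab, habne⟩ := Finset.exists_ne_zero_of_sum_ne_zero h
    have h1 : MvPowerSeries.coeff ab.1 (gMat f 0 0) ≠ 0 := fun hh => habne (by rw [hh, zero_mul])
    have h2 : MvPowerSeries.coeff ab.2 (zetaOf (fres f)) ≠ 0 := fun hh => habne (by rw [hh, mul_zero])
    have hq : q = ab.1 + ab.2 := (Finset.HasAntidiagonal.mem_antidiagonal.mp hab).symm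
    rw [coeff_gMat] at h1
    obtain ⟨k, -, hk⟩ := Finset.exists_ne_zero_of_sum_ne_zero h1
    obtain ⟨w, hw0, hwL, htrans, htv⟩ := pow_support f k ab.1 0 0 hk
    have hm1 : ab.1 ∈ AddSubmonoid.closure {q' | IsCWV f q'} := by
      rcases Nat.eq_zero_or_pos k with rfl | hkpos
      · have : ab.1 = 0 := by rw [htv]; simp [tvec]
        rw [this]; exact AddSubmonoid.zero_mem _
      · exact AddSubmonoid.subset_closure ⟨k, w, hkpos, by rw [hwL, hw0], htrans, htv⟩
    have hm2 : ab.2 ∈ AddSubmonoid.closure {q' | IsCWV f q'} := by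
      have := ih (fres f) ab.2 h2
      refine AddSubmonoid.closure_mono ?_ this
      intro x hx
      exact WSet_fres_subset f x hx
    rw [hq]
    exact AddSubmonoid.add_mem _ hm1 hm2

end
section Graph
variable {r n : ℕ} (j₁ j₂ : Fin n → Fin r)

def dhead (d : Fin n × Bool) : Fin r := if d.2 then j₂ d.1 else j₁ d.1
def dtail (d : Fin n × Bool) : Fin r := if d.2 then j₁ d.1 else j₂ d.1
def dcond (d d' : Fin n × Bool) : Prop := dhead j₁ j₂ d = dtail j₁ j₂ d' ∧ d' ≠ (d.1, !d.2)
def Inc (j : Fin r) (i : Fin n) : Prop := j = j₁ i ∨ j = j₂ i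

instance (j : Fin r) (i : Fin n) : Decidable (Inc j₁ j₂ j i) :=
  inferInstanceAs (Decidable (_ ∨ _))

instance (d d' : Fin n × Bool) : Decidable (dcond j₁ j₂ d d') :=
  inferInstanceAs (Decidable (_ ∧ _))

lemma dhead_ne_dtail (hj : ∀ i, j₁ i ≠ j₂ i) (d : Fin n × Bool) :
    dhead j₁ j₂ d ≠ dtail j₁ j₂ d := by
  rcases d with ⟨i, b⟩
  cases b <;> simp [dhead, dtail] <;> [exact hj i; exact (hj i).symm]

lemma dInc (j : Fin r) (d : Fin n × Bool) :
    Inc j₁ j₂ j d.1 ↔ (dhead j₁ j₂ d = j ∨ dtail j₁ j₂ d = j) := by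
  rcases d with ⟨i, b⟩
  cases b <;> simp [Inc, dhead, dtail, eq_comm, or_comm]

lemma same_edge (d d' : Fin n × Bool) (h : d.1 = d'.1) : d' = d ∨ d' = (d.1, !d.2) := by
  rcases d with ⟨i, b⟩; rcases d' with ⟨i', b'⟩
  simp only at h
  subst h
  cases b <;> cases b' <;> simp

section Walk
variable (L : ℕ) (W : ℕ → Fin n × Bool)

def csucc (k : ℕ) : ℕ := (k + 1) % L
def cpred (k : ℕ) : ℕ := if k = 0 then L - 1 else k - 1

lemma csucc_lt (hL : 0 < L) (k : ℕ) : csucc L k < L := Nat.mod_lt _ hL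

lemma cpred_lt (hL : 0 < L) {k : ℕ} (h : k < L) : cpred L k < L := by
  unfold cpred; split_ifs <;> omega

lemma W_csucc (hclosed : W L = W 0) {k : ℕ} (h : k < L) : W (csucc L k) = W (k + 1) := by
  unfold csucc
  rcases Nat.lt_or_ge (k+1) L with h' | h'
  · rw [Nat.mod_eq_of_lt h']
  · have hk1 : k + 1 = L := by omega
    rw [hk1, Nat.mod_self, hclosed.symm]

lemma W_cpred (hL : 0 < L) (hclosed : W L = W 0) {k : ℕ} (h : k < L) :
    W (cpred L k + 1) = W k := by
  unfold cpred
  split_ifs with h0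
  · rw [Nat.sub_add_cancel hL, hclosed, h0]
  · rw [Nat.sub_add_cancel (by omega)]

lemma csucc_injOn {a b : ℕ} (ha : a < L) (hb : b < L) (h : csucc L a = csucc L b) : a = b := by
  unfold csucc at h
  rcases Nat.lt_or_ge (a+1) L with hA | hA <;> rcases Nat.lt_or_ge (b+1) L with hB | hB
  · rw [Nat.mod_eq_of_lt hA, Nat.mod_eq_of_lt hB] at h; omega
  · have hb1 : b + 1 = L := by omega
    rw [Nat.mod_eq_of_lt hA, hb1, Nat.mod_self] at h; omega
  · have ha1 : a + 1 = L := by omega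
    rw [Nat.mod_eq_of_lt hB, ha1, Nat.mod_self] at h; omega
  · omega

lemma cpred_injOn {a b : ℕ} (ha : a < L) (hb : b < L) (h : cpred L a = cpred L b) : a = b := by
  unfold cpred at h
  split_ifs at h <;> omega

lemma csucc_cpred (hL : 0 < L) {k : ℕ} (h : k < L) : csucc L (cpred L k) = k := by
  unfold csucc cpred
  split_ifs with h0
  · rw [Nat.sub_add_cancel hL, Nat.mod_self, h0]
  · rw [Nat.sub_add_cancel (by omega), Nat.mod_eq_of_lt h]

def wcount (i : Fin n) : ℕ := #(filter (fun k => (W k).1 = i) (range L))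

def VIS (j : Fin r) : Finset ℕ := filter (fun k => dhead j₁ j₂ (W k) = j) (range L)
def DEP (j : Fin r) : Finset ℕ := filter (fun k => dtail j₁ j₂ (W k) = j) (range L)

variable {L W}

lemma F2 (hL : 0 < L) (hclosed : W L = W 0)
    (htrans : ∀ k < L, dcond j₁ j₂ (W k) (W (k+1))) (j : Fin r) :
    #(VIS j₁ j₂ L W j) = #(DEP j₁ j₂ L W j) := by
  refine Finset.card_bij (fun k _ => csucc L k) ?_ ?_ ?_
  · intro k hk
    simp only [VIS, DEP, mem_filter, mem_range] at hk ⊢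
    refine ⟨csucc_lt L hL _, ?_⟩
    rw [W_csucc L W hclosed hk.1, ← (htrans k hk.1).1, hk.2]
  · intro a ha b hb h
    simp only [VIS, mem_filter, mem_range] at ha hb
    exact csucc_injOn L ha.1 hb.1 h
  · intro b hb
    simp only [VIS, DEP, mem_filter, mem_range] at hb ⊢
    refine ⟨cpred L b, ⟨cpred_lt L hL hb.1, ?_⟩, csucc_cpred L hL hb.1⟩
    rw [(htrans _ (cpred_lt L hL hb.1)).1, W_cpred L W hL hclosed hb.1, hb.2]

lemma F1 (hj : ∀ i, j₁ i ≠ j₂ i) (j : Fin r) :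
    ∑ i' ∈ filter (fun i' => Inc j₁ j₂ j i') univ, wcount L W i'
      = #(VIS j₁ j₂ L W j) + #(DEP j₁ j₂ L W j) := by
  have hsum : #(filter (fun k => Inc j₁ j₂ j (W k).1) (range L))
      = ∑ i' ∈ filter (fun i' => Inc j₁ j₂ j i') univ,
          #(filter (fun k => (W k).1 = i') (filter (fun k => Inc j₁ j₂ j (W k).1) (range L))) := by
    refine Finset.card_eq_sum_card_fiberwise ?_
    intro k hk
    simp only [mem_coe, mem_filter, mem_univ, true_and] at hk ⊢
    exact hk.2
  have hfib : ∀ i' ∈ filter (fun i' => Inc j₁ j₂ j i') univ,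
      #(filter (fun k => (W k).1 = i') (filter (fun k => Inc j₁ j₂ j (W k).1) (range L)))
        = wcount L W i' := by
    intro i' hi'
    simp only [mem_filter, mem_univ, true_and] at hi'
    rw [Finset.filter_filter]
    unfold wcount
    congr 1
    apply Finset.filter_congr
    intro k _
    constructor
    · rintro ⟨-, h2⟩; exact h2
    · intro h2; exact ⟨by rw [h2]; exact hi', h2⟩
  rw [Finset.sum_congr rfl hfib] at hsum
  rw [← hsum]
  have hpart : filter (fun k => Inc j₁ j₂ j (W k).1) (range L)
      = VIS j₁ j₂ L W j ∪ DEP j₁ j₂ L W j := by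
    unfold VIS DEP
    rw [← Finset.filter_or]
    apply Finset.filter_congr
    intro k _
    exact dInc j₁ j₂ j (W k)
  have hdisj : Disjoint (VIS j₁ j₂ L W j) (DEP j₁ j₂ L W j) := by
    unfold VIS DEP
    rw [Finset.disjoint_filter]
    intro k _ hk1 hk2
    exact dhead_ne_dtail j₁ j₂ hj (W k) (hk1.trans hk2.symm)
  rw [hpart, Finset.card_union_of_disjoint hdisj]

/-- mixed-case helper for F3 -/
lemma F3mix (hL : 0 < L) (hclosed : W L = W 0)
    (htrans : ∀ k < L, dcond j₁ j₂ (W k) (W (k+1)))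
    (hj : ∀ i, j₁ i ≠ j₂ i) {j : Fin r} {i : Fin n}
    {a b : ℕ} (ha : a < L) (hb : b < L) (hea : (W a).1 = i) (heb : (W b).1 = i)
    (h1 : dhead j₁ j₂ (W a) = j) (h2 : ¬ dhead j₁ j₂ (W b) = j)
    (hab : a = cpred L b) : False := by
  have hWb : W (a + 1) = W b := by rw [hab]; exact W_cpred L W hL hclosed hb
  have hcond := htrans a ha
  have hedge : (W a).1 = (W (a+1)).1 := by rw [hWb, heb, hea]
  rcases same_edge (W a) (W (a+1)) hedge with he | he
  · -- W (a+1) = W a so W b = W a, contradicting h2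
    have : W b = W a := hWb.symm.trans he
    rw [this] at h2
    exact h2 h1
  · exact hcond.2 he

lemma F3 (hL : 0 < L) (hclosed : W L = W 0)
    (htrans : ∀ k < L, dcond j₁ j₂ (W k) (W (k+1)))
    (hj : ∀ i, j₁ i ≠ j₂ i) {j : Fin r} {i : Fin n} (hInc : Inc j₁ j₂ j i) :
    wcount L W i ≤ #(VIS j₁ j₂ L W j) := by
  refine Finset.card_le_card_of_injOn
    (fun k => if dhead j₁ j₂ (W k) = j then k else cpred L k) ?_ ?_
  · intro k hk
    simp only [wcount, VIS, mem_filter, mem_range, mem_coe] at hk ⊢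
    split_ifs with hh
    · exact ⟨hk.1, hh⟩
    · have htl : dtail j₁ j₂ (W k) = j := by
        have := (dInc j₁ j₂ j (W k)).mp (by rw [hk.2]; exact hInc)
        tauto
      refine ⟨cpred_lt L hL hk.1, ?_⟩
      rw [(htrans _ (cpred_lt L hL hk.1)).1, W_cpred L W hL hclosed hk.1, htl]
  · intro a ha b hb hab
    simp only [wcount, coe_filter, Set.mem_setOf_eq, mem_range] at ha hb
    simp only at hab
    split_ifs at hab with h1 h2 h2
    · exact hab
    · exact absurd hab (fun hab => F3mix j₁ j₂ hL hclosed htrans hj ha.1 hb.1 ha.2 hb.2 h1 h2 hab)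
    · exact absurd hab.symm (fun hab => F3mix j₁ j₂ hL hclosed htrans hj hb.1 ha.1 hb.2 ha.2 h2 h1 hab)
    · exact cpred_injOn L ha.1 hb.1 hab

/-- mixed-case helper for F4 -/
lemma F4mix (hclosed : W L = W 0)
    (htrans : ∀ k < L, dcond j₁ j₂ (W k) (W (k+1)))
    (hj : ∀ i, j₁ i ≠ j₂ i) {j : Fin r}
    {a b : ℕ} (ha : a < L) (hb : b < L)
    (hva : dhead j₁ j₂ (W a) = j) (hvb : dhead j₁ j₂ (W b) = j)
    (hab : a = csucc L b) : False := by
  have hWa : W a = W (b+1) := by rw [hab]; exact W_csucc L W hclosed hb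
  have hht := (htrans b hb).1
  rw [← hWa] at hht
  exact dhead_ne_dtail j₁ j₂ hj (W a) (hva.trans (hvb.symm.trans hht))

lemma F4 (hL : 0 < L) (hclosed : W L = W 0)
    (htrans : ∀ k < L, dcond j₁ j₂ (W k) (W (k+1)))
    (hj : ∀ i, j₁ i ≠ j₂ i) {j : Fin r} {i : Fin n}
    (hrule : ∀ k < L, dhead j₁ j₂ (W k) = j → ((W k).1 = i ∨ (W (k+1)).1 = i)) :
    #(VIS j₁ j₂ L W j) ≤ wcount L W i := by
  refine Finset.card_le_card_of_injOn
    (fun k => if (W k).1 = i then k else csucc L k) ?_ ?_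
  · intro k hk
    simp only [VIS, wcount, mem_filter, mem_range, mem_coe] at hk ⊢
    split_ifs with hh
    · exact ⟨hk.1, hh⟩
    · refine ⟨csucc_lt L hL _, ?_⟩
      rw [W_csucc L W hclosed hk.1]
      rcases hrule k hk.1 hk.2 with h | h
      · exact absurd h hh
      · exact h
  · intro a ha b hb hab
    simp only [VIS, coe_filter, Set.mem_setOf_eq, mem_range] at ha hb
    simp only at hab
    split_ifs at hab with h1 h2 h2
    · exact hab
    · exact absurd hab (fun hab => F4mix j₁ j₂ hclosed htrans hj ha.1 hb.1 ha.2 hb.2 hab)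
    · exact absurd hab.symm (fun hab => F4mix j₁ j₂ hclosed htrans hj hb.1 ha.1 hb.2 ha.2 hab)
    · exact csucc_injOn L ha.1 hb.1 hab

end Walk

/-- the linear functional of the cone constraint indexed by `(j, i)` -/
def cval (c : (Fin r × Fin n) ⊕ Fin n) (ν : Fin n → ℝ) : ℝ :=
  match c with
  | Sum.inr i => ν i
  | Sum.inl (j, i) =>
      (∑ i' ∈ univ.erase i, (if Inc j₁ j₂ j i' then (1:ℝ) else 0) * ν i')
        - (if Inc j₁ j₂ j i then (1:ℝ) else 0) * ν i

lemma cval_inl (ν : Fin n → ℝ) (j : Fin r) (i : Fin n) :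
    cval j₁ j₂ (Sum.inl (j, i)) ν
      = (∑ i' ∈ filter (fun i' => Inc j₁ j₂ j i') univ, ν i')
        - 2 * (if Inc j₁ j₂ j i then ν i else 0) := by
  show _ - _ = _
  have h1 : ∑ i' ∈ univ.erase i, (if Inc j₁ j₂ j i' then (1:ℝ) else 0) * ν i'
      = (∑ i' ∈ univ, (if Inc j₁ j₂ j i' then (1:ℝ) else 0) * ν i')
        - (if Inc j₁ j₂ j i then (1:ℝ) else 0) * ν i := by
    rw [← Finset.add_sum_erase univ _ (mem_univ i)]
    ring
  rw [h1]
  have h2 : ∑ i' ∈ univ, (if Inc j₁ j₂ j i' then (1:ℝ) else 0) * ν i'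
      = ∑ i' ∈ filter (fun i' => Inc j₁ j₂ j i') univ, ν i' := by
    rw [Finset.sum_filter]
    refine Finset.sum_congr rfl fun i' _ => ?_
    split_ifs <;> ring
  rw [h2]
  split_ifs <;> ring

/-- a dart of edge `i` with tail `j` -/
lemma dartTo {j : Fin r} {i : Fin n} (h : Inc j₁ j₂ j i) :
    ∃ d : Fin n × Bool, d.1 = i ∧ dtail j₁ j₂ d = j := by
  rcases h with h | h
  · exact ⟨(i, true), rfl, by simp [dtail, h]⟩
  · exact ⟨(i, false), rfl, by simp [dtail, h]⟩

lemma step_lemma (ν : Fin n → ℝ)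
    (hcone : ∀ c, 0 ≤ cval j₁ j₂ c ν) (d : Fin n × Bool) (hd : 0 < ν d.1) :
    ∃ d' : Fin n × Bool, 0 < ν d'.1 ∧ dcond j₁ j₂ d d' ∧
      ∀ i, Inc j₁ j₂ (dhead j₁ j₂ d) i → cval j₁ j₂ (Sum.inl (dhead j₁ j₂ d, i)) ν = 0 →
        (d.1 = i ∨ d'.1 = i) := by
  classical
  set j := dhead j₁ j₂ d with hjdef
  set e0 := d.1 with he0
  have hInc0 : Inc j₁ j₂ j e0 := (dInc j₁ j₂ j d).mpr (Or.inl rfl)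
  set S := ∑ i' ∈ filter (fun i' => Inc j₁ j₂ j i') univ, ν i' with hS
  have hnn : ∀ i, 0 ≤ ν i := fun i => hcone (Sum.inr i)
  have htb : ∀ i, Inc j₁ j₂ j i → 2 * ν i ≤ S := by
    intro i hi
    have := hcone (Sum.inl (j, i))
    rw [cval_inl, if_pos hi] at this
    linarith
  by_cases hex : ∃ i', i' ≠ e0 ∧ Inc j₁ j₂ j i' ∧ cval j₁ j₂ (Sum.inl (j, i')) ν = 0
  · obtain ⟨i', hne, hInc', htight⟩ := hex
    obtain ⟨d', hd'1, hd'tail⟩ := dartTo j₁ j₂ hInc'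
    have htight' : 2 * ν i' = S := by
      rw [cval_inl, if_pos hInc'] at htight
      linarith
    have hpos' : 0 < ν i' := by
      have hsub : {e0, i'} ⊆ filter (fun i'' => Inc j₁ j₂ j i'') univ := by
        intro x hx
        simp only [mem_insert, mem_singleton] at hx
        rcases hx with rfl | rfl <;> simp [mem_filter, hInc0, hInc']
      have h2 : ν e0 + ν i' ≤ S := by
        have := Finset.sum_le_sum_of_subset_of_nonneg hsub (fun x _ _ => hnn x)
        rwa [Finset.sum_insert (by simpa using hne.symm), Finset.sum_singleton] at this
      linarith
    refine ⟨d', hd'1 ▸ hpos', ⟨hd'tail.symm, ?_⟩, ?_⟩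
    · intro hcontra
      apply hne
      rw [← hd'1, hcontra]
    · intro i hi htighti
      by_contra hcon
      push_neg at hcon
      obtain ⟨hie0, hid'⟩ := hcon
      have hii' : i ≠ i' := fun hh => hid' (by rw [hd'1, hh])
      have htighti' : 2 * ν i = S := by
        rw [cval_inl, if_pos hi] at htighti
        linarith
      have hsub : {e0, i, i'} ⊆ filter (fun i'' => Inc j₁ j₂ j i'') univ := by
        intro x hx
        simp only [mem_insert, mem_singleton] at hx
        rcases hx with rfl | rfl | rfl <;> simp [mem_filter, hInc0, hi, hInc']
      have h3 : ν e0 + (ν i + ν i') ≤ S := by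
        have := Finset.sum_le_sum_of_subset_of_nonneg hsub (fun x _ _ => hnn x)
        rwa [Finset.sum_insert (by simp [Ne.symm hie0, hne.symm]; tauto),
          Finset.sum_insert (by simpa using hii'), Finset.sum_singleton] at this
      linarith
  · -- no tight constraint besides possibly e0 : pick any positive exit edge
    push_neg at hex
    have hS0 : 2 * ν e0 ≤ S := htb e0 hInc0
    have he0mem : e0 ∈ filter (fun i'' => Inc j₁ j₂ j i'') univ := by
      simp [mem_filter, hInc0]
    have hsplit : S = ν e0 + ∑ i' ∈ (filter (fun i'' => Inc j₁ j₂ j i'') univ).erase e0, ν i' :=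
      (Finset.add_sum_erase _ _ he0mem).symm
    have hpos : 0 < ∑ i' ∈ (filter (fun i'' => Inc j₁ j₂ j i'') univ).erase e0, ν i' := by
      linarith
    have hex' : ∃ i' ∈ (filter (fun i'' => Inc j₁ j₂ j i'') univ).erase e0, 0 < ν i' := by
      by_contra hcon
      push_neg at hcon
      have : ∑ i' ∈ (filter (fun i'' => Inc j₁ j₂ j i'') univ).erase e0, ν i' ≤ 0 :=
        Finset.sum_nonpos hcon
      linarith
    obtain ⟨i', hi'mem, hi'pos⟩ := hex'
    have hi'ne : i' ≠ e0 := (Finset.mem_erase.mp hi'mem).1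
    have hi'Inc : Inc j₁ j₂ j i' := by
      have := (Finset.mem_erase.mp hi'mem).2
      simpa [mem_filter] using this
    obtain ⟨d', hd'1, hd'tail⟩ := dartTo j₁ j₂ hi'Inc
    refine ⟨d', hd'1 ▸ hi'pos, ⟨hd'tail.symm, ?_⟩, ?_⟩
    · intro hcontra
      apply hi'ne
      rw [← hd'1, hcontra]
    · intro i hi htighti
      left
      by_contra hie0
      exact hex i (fun hh => hie0 hh.symm) hi htighti
/-- existence of a cyclic good walk through a positive edge -/
lemma crux (ν : Fin n → ℝ) (hcone : ∀ c, 0 ≤ cval j₁ j₂ c ν)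
    {i₀ : Fin n} (hi₀ : 0 < ν i₀) :
    ∃ (L : ℕ) (W : ℕ → Fin n × Bool), 0 < L ∧ W L = W 0 ∧
      (∀ k < L, dcond j₁ j₂ (W k) (W (k+1))) ∧
      (∀ k < L, 0 < ν (W k).1) ∧
      (∀ k < L, ∀ i, Inc j₁ j₂ (dhead j₁ j₂ (W k)) i →
        cval j₁ j₂ (Sum.inl (dhead j₁ j₂ (W k), i)) ν = 0 →
        ((W k).1 = i ∨ (W (k+1)).1 = i)) := by
  classical
  set Good := {d : Fin n × Bool // 0 < ν d.1} with hGood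
  have stp : ∀ d : Good, ∃ d' : Good, dcond j₁ j₂ d.1 d'.1 ∧
      ∀ i, Inc j₁ j₂ (dhead j₁ j₂ d.1) i →
        cval j₁ j₂ (Sum.inl (dhead j₁ j₂ d.1, i)) ν = 0 → (d.1.1 = i ∨ d'.1.1 = i) := by
    intro d
    obtain ⟨d', h1, h2, h3⟩ := step_lemma j₁ j₂ ν hcone d.1 d.2
    exact ⟨⟨d', h1⟩, h2, h3⟩
  let u : ℕ → Good := fun k => Nat.rec ⟨(i₀, true), hi₀⟩ (fun _ prev => (stp prev).choose) k
  have hu : ∀ k, dcond j₁ j₂ (u k).1 (u (k+1)).1 ∧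
      ∀ i, Inc j₁ j₂ (dhead j₁ j₂ (u k).1) i →
        cval j₁ j₂ (Sum.inl (dhead j₁ j₂ (u k).1, i)) ν = 0 →
        ((u k).1.1 = i ∨ (u (k+1)).1.1 = i) := fun k => (stp (u k)).choose_spec
  obtain ⟨a, b, hab, huab⟩ := Finite.exists_ne_map_eq_of_infinite u
  have main : ∀ a b : ℕ, a < b → u a = u b →
      ∃ (L : ℕ) (W : ℕ → Fin n × Bool), 0 < L ∧ W L = W 0 ∧
      (∀ k < L, dcond j₁ j₂ (W k) (W (k+1))) ∧
      (∀ k < L, 0 < ν (W k).1) ∧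
      (∀ k < L, ∀ i, Inc j₁ j₂ (dhead j₁ j₂ (W k)) i →
        cval j₁ j₂ (Sum.inl (dhead j₁ j₂ (W k), i)) ν = 0 →
        ((W k).1 = i ∨ (W (k+1)).1 = i)) := by
    intro a b hlt huab
    refine ⟨b - a, fun k => (u (a + k)).1, by omega, ?_, ?_, ?_, ?_⟩
    · show (u (a + (b - a))).1 = (u (a + 0)).1
      have hab' : a + (b - a) = b := by omega
      rw [hab', ← huab, Nat.add_zero]
    · intro k _
      exact (hu (a + k)).1
    · intro k _
      exact (u (a + k)).2
    · intro k _
      exact (hu (a + k)).2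
  rcases Ne.lt_or_gt hab with hlt | hlt
  · exact main a b hlt huab
  · exact main b a hlt huab.symm
lemma cval_sub_smul (c : (Fin r × Fin n) ⊕ Fin n) (ν μ : Fin n → ℝ) (t : ℝ) :
    cval j₁ j₂ c (fun i => ν i - t * μ i) = cval j₁ j₂ c ν - t * cval j₁ j₂ c μ := by
  rcases c with ⟨j, i⟩ | i
  · rw [cval_inl, cval_inl, cval_inl]
    rw [Finset.sum_sub_distrib]
    have : ∑ i' ∈ filter (fun i' => Inc j₁ j₂ j i') univ, t * μ i'
        = t * ∑ i' ∈ filter (fun i' => Inc j₁ j₂ j i') univ, μ i' := by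
      rw [Finset.mul_sum]
    rw [this]
    split_ifs <;> ring
  · rfl

lemma wcount_zero {L : ℕ} {W : ℕ → Fin n × Bool} (ν : Fin n → ℝ)
    (hpos : ∀ k < L, 0 < ν (W k).1) {i : Fin n} (hν : ν i = 0) : wcount L W i = 0 := by
  rw [wcount, Finset.card_eq_zero, Finset.filter_eq_empty_iff]
  intro k hk he
  have := hpos k (mem_range.mp hk)
  rw [he, hν] at this
  exact lt_irrefl 0 this

lemma walk_props (hj : ∀ i, j₁ i ≠ j₂ i) (ν : Fin n → ℝ)
    {L : ℕ} {W : ℕ → Fin n × Bool} (hL : 0 < L) (hclosed : W L = W 0)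
    (htrans : ∀ k < L, dcond j₁ j₂ (W k) (W (k+1)))
    (hpos : ∀ k < L, 0 < ν (W k).1)
    (hrule : ∀ k < L, ∀ i, Inc j₁ j₂ (dhead j₁ j₂ (W k)) i →
        cval j₁ j₂ (Sum.inl (dhead j₁ j₂ (W k), i)) ν = 0 →
        ((W k).1 = i ∨ (W (k+1)).1 = i))
    (hcone : ∀ c, 0 ≤ cval j₁ j₂ c ν) :
    (∀ c, 0 ≤ cval j₁ j₂ c (fun i => (wcount L W i : ℝ)))
    ∧ (∀ c, cval j₁ j₂ c ν = 0 → cval j₁ j₂ c (fun i => (wcount L W i : ℝ)) = 0) := by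
  set p : Fin n → ℝ := fun i => (wcount L W i : ℝ) with hp
  have hSn : ∀ j : Fin r, ∑ i' ∈ filter (fun i' => Inc j₁ j₂ j i') univ, p i'
      = 2 * (#(VIS j₁ j₂ L W j) : ℝ) := by
    intro j
    have h1 := F1 j₁ j₂ hj (L := L) (W := W) j
    have h2 := F2 j₁ j₂ hL hclosed htrans j
    have : ((∑ i' ∈ filter (fun i' => Inc j₁ j₂ j i') univ, wcount L W i' : ℕ) : ℝ)
        = ∑ i' ∈ filter (fun i' => Inc j₁ j₂ j i') univ, p i' := by
      push_cast [hp]; rfl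
    rw [← this, h1, h2]
    push_cast
    ring
  constructor
  · intro c
    rcases c with ⟨j, i⟩ | i
    · rw [cval_inl, hSn j]
      split_ifs with hInc
      · have h3 := F3 j₁ j₂ hL hclosed htrans hj hInc
        have : (wcount L W i : ℝ) ≤ (#(VIS j₁ j₂ L W j) : ℝ) := by exact_mod_cast h3
        simp only [hp]
        linarith
      · have : (0:ℝ) ≤ (#(VIS j₁ j₂ L W j) : ℝ) := by positivity
        linarith
    · show (0:ℝ) ≤ p i
      simp [hp]
  · intro c htight
    rcases c with ⟨j, i⟩ | i
    · rw [cval_inl, hSn j]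
      by_cases hInc : Inc j₁ j₂ j i
      · rw [if_pos hInc]
        have hr : ∀ k < L, dhead j₁ j₂ (W k) = j → ((W k).1 = i ∨ (W (k+1)).1 = i) := by
          intro k hk hdj
          exact hrule k hk i (by rw [hdj]; exact hInc) (by rw [hdj]; exact htight)
        have h4 := F4 j₁ j₂ hL hclosed htrans hj hr
        have h3 := F3 j₁ j₂ hL hclosed htrans hj hInc
        have heq : wcount L W i = #(VIS j₁ j₂ L W j) := le_antisymm h3 h4
        simp only [hp]
        rw [heq]
        ring
      · rw [if_neg hInc, mul_zero, sub_zero, ← hSn j]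
        rw [cval_inl, if_neg hInc, mul_zero, sub_zero] at htight
        have hterm : ∀ i' ∈ filter (fun i' => Inc j₁ j₂ j i') univ, ν i' = 0 := by
          have hnn : ∀ i' ∈ filter (fun i' => Inc j₁ j₂ j i') univ, 0 ≤ ν i' :=
            fun i' _ => hcone (Sum.inr i')
          intro i' hi'
          exact (Finset.sum_eq_zero_iff_of_nonneg hnn).mp htight i' hi'
        refine Finset.sum_eq_zero fun i' hi' => ?_
        simp only [hp]
        rw [wcount_zero ν hpos (hterm i' hi')]
        norm_num
    · show p i = 0
      simp only [hp]
      rw [wcount_zero ν hpos htight]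
      norm_num

lemma wcount_ne_zero {L : ℕ} {W : ℕ → Fin n × Bool} (hL : 0 < L) :
    0 < wcount L W (W 0).1 := by
  rw [wcount, Finset.card_pos]
  exact ⟨0, by simp [mem_filter, mem_range, hL]⟩

lemma decomp (hj : ∀ i, j₁ i ≠ j₂ i) (T : Set (Fin n → ℝ))
    (hTgen : ∀ (L : ℕ) (W : ℕ → Fin n × Bool), 0 < L → W L = W 0 →
      (∀ k < L, dcond j₁ j₂ (W k) (W (k+1))) → (fun i => (wcount L W i : ℝ)) ∈ T) :
    ∀ (N : ℕ) (ν : Fin n → ℝ), (∀ c, 0 ≤ cval j₁ j₂ c ν) →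
      Set.ncard {c | cval j₁ j₂ c ν ≠ 0} ≤ N →
      ν ∈ Submodule.span {c : ℝ // 0 ≤ c} T := by
  intro N
  induction N with
  | zero =>
    intro ν hcone hcard
    have hempty : {c | cval j₁ j₂ c ν ≠ 0} = ∅ := by
      rw [← Set.ncard_eq_zero (Set.toFinite _)] at *
      omega
    have hν : ν = 0 := by
      funext i
      by_contra hne
      have : (Sum.inr i : (Fin r × Fin n) ⊕ Fin n) ∈ {c | cval j₁ j₂ c ν ≠ 0} := hne
      rw [hempty] at this
      exact this
    rw [hν]
    exact Submodule.zero_mem _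
  | succ N ih =>
    intro ν hcone hcard
    classical
    by_cases hν : ν = 0
    · rw [hν]; exact Submodule.zero_mem _
    · have hex : ∃ i₀, 0 < ν i₀ := by
        by_contra hcon
        push_neg at hcon
        apply hν
        funext i
        exact le_antisymm (hcon i) (hcone (Sum.inr i))
      obtain ⟨i₀, hi₀⟩ := hex
      obtain ⟨L, W, hL, hclosed, htrans, hpos, hrule⟩ := crux j₁ j₂ ν hcone hi₀
      obtain ⟨hC1, hC2⟩ := walk_props j₁ j₂ hj ν hL hclosed htrans hpos hrule hcone
      set p : Fin n → ℝ := fun i => (wcount L W i : ℝ) with hpdef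
      have hpT : p ∈ T := hTgen L W hL hclosed htrans
      -- the set of constraints positive on p
      set Bf : Finset ((Fin r × Fin n) ⊕ Fin n) := filter (fun c => 0 < cval j₁ j₂ c p) univ with hBf
      have hBne : Bf.Nonempty := by
        refine ⟨Sum.inr (W 0).1, ?_⟩
        simp only [hBf, mem_filter, mem_univ, true_and]
        show (0:ℝ) < p (W 0).1
        simp only [hpdef]
        exact_mod_cast wcount_ne_zero hL
      obtain ⟨c₀, hc₀mem, hc₀min⟩ := Finset.exists_min_image Bf
        (fun c => cval j₁ j₂ c ν / cval j₁ j₂ c p) hBne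
      have hc₀p : 0 < cval j₁ j₂ c₀ p := by
        simpa [hBf, mem_filter] using hc₀mem
      have hc₀ν : 0 < cval j₁ j₂ c₀ ν := by
        rcases lt_or_eq_of_le (hcone c₀) with h | h
        · exact h
        · exfalso
          have := hC2 c₀ h.symm
          rw [this] at hc₀p
          exact lt_irrefl 0 hc₀p
      set t : ℝ := cval j₁ j₂ c₀ ν / cval j₁ j₂ c₀ p with ht
      have htpos : 0 < t := div_pos hc₀ν hc₀p
      set ν' : Fin n → ℝ := fun i => ν i - t * p i with hν'
      have hcval' : ∀ c, cval j₁ j₂ c ν' = cval j₁ j₂ c ν - t * cval j₁ j₂ c p :=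
        fun c => cval_sub_smul j₁ j₂ c ν p t
      have hcone' : ∀ c, 0 ≤ cval j₁ j₂ c ν' := by
        intro c
        rw [hcval']
        by_cases hc : c ∈ Bf
        · have hcp : 0 < cval j₁ j₂ c p := by simpa [hBf, mem_filter] using hc
          have h5 := hc₀min c hc
          have h6 := (le_div_iff₀ hcp).mp h5
          linarith
        · have hcp : cval j₁ j₂ c p = 0 := by
            have h1 : ¬ 0 < cval j₁ j₂ c p := by simpa [hBf, mem_filter] using hc
            have h2 := hC1 c
            linarith
          rw [hcp]
          have := hcone c
          linarith
      have hsub : {c | cval j₁ j₂ c ν' ≠ 0} ⊂ {c | cval j₁ j₂ c ν ≠ 0} := by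
        constructor
        · intro c hc
          simp only [Set.mem_setOf_eq] at hc ⊢
          intro hcc
          apply hc
          rw [hcval', hcc, hC2 c hcc]
          ring
        · intro hsub'
          have hc₀ : c₀ ∈ {c | cval j₁ j₂ c ν ≠ 0} := ne_of_gt hc₀ν
          have : c₀ ∈ {c | cval j₁ j₂ c ν' ≠ 0} := hsub' hc₀
          apply this
          rw [hcval', ht, div_mul_cancel₀ _ (ne_of_gt hc₀p)]
          ring
      have hcard' : Set.ncard {c | cval j₁ j₂ c ν' ≠ 0} ≤ N := by
        have := Set.ncard_lt_ncard hsub (Set.toFinite _)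
        omega
      have hmem' := ih ν' hcone' hcard'
      have hdecomp : ν = ν' + t • p := by
        funext i
        simp only [hν', Pi.add_apply, Pi.smul_apply, smul_eq_mul]
        ring
      rw [hdecomp]
      refine Submodule.add_mem _ hmem' ?_
      have : (⟨t, le_of_lt htpos⟩ : {c : ℝ // 0 ≤ c}) • p = t • p := rfl
      rw [← this]
      exact Submodule.smul_mem _ _ (Submodule.subset_span hpT)
lemma cval_zero (c : (Fin r × Fin n) ⊕ Fin n) : cval j₁ j₂ c (fun _ => (0:ℝ)) = 0 := by
  rcases c with ⟨j, i⟩ | i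
  · rw [cval_inl]
    simp
  · rfl

lemma cval_add (c : (Fin r × Fin n) ⊕ Fin n) (ν μ : Fin n → ℝ) :
    cval j₁ j₂ c (fun i => ν i + μ i) = cval j₁ j₂ c ν + cval j₁ j₂ c μ := by
  have h := cval_sub_smul j₁ j₂ c ν μ (-1)
  have h2 : (fun i => ν i - (-1) * μ i) = (fun i => ν i + μ i) := by funext i; ring
  rw [h2] at h
  rw [h]; ring

lemma cval_smul (c : (Fin r × Fin n) ⊕ Fin n) (ν : Fin n → ℝ) (t : ℝ) :
    cval j₁ j₂ c (fun i => t * ν i) = t * cval j₁ j₂ c ν := by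
  have h := cval_sub_smul j₁ j₂ c (fun _ => (0:ℝ)) ν (-t)
  have h2 : (fun i => (fun _ => (0:ℝ)) i - (-t) * ν i) = (fun i => t * ν i) := by funext i; ring
  rw [h2] at h
  rw [h, cval_zero]; ring

/-- cone membership for closed non-backtracking walk count vectors -/
lemma walk_cone (hj : ∀ i, j₁ i ≠ j₂ i)
    {L : ℕ} {W : ℕ → Fin n × Bool} (hL : 0 < L) (hclosed : W L = W 0)
    (htrans : ∀ k < L, dcond j₁ j₂ (W k) (W (k+1))) :
    ∀ c, 0 ≤ cval j₁ j₂ c (fun i => (wcount L W i : ℝ)) := by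
  set p : Fin n → ℝ := fun i => (wcount L W i : ℝ) with hp
  have hSn : ∀ j : Fin r, ∑ i' ∈ filter (fun i' => Inc j₁ j₂ j i') univ, p i'
      = 2 * (#(VIS j₁ j₂ L W j) : ℝ) := by
    intro j
    have h1 := F1 j₁ j₂ hj (L := L) (W := W) j
    have h2 := F2 j₁ j₂ hL hclosed htrans j
    have : ((∑ i' ∈ filter (fun i' => Inc j₁ j₂ j i') univ, wcount L W i' : ℕ) : ℝ)
        = ∑ i' ∈ filter (fun i' => Inc j₁ j₂ j i') univ, p i' := by
      push_cast [hp]; rfl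
    rw [← this, h1, h2]
    push_cast
    ring
  intro c
  rcases c with ⟨j, i⟩ | i
  · rw [cval_inl, hSn j]
    split_ifs with hInc
    · have h3 := F3 j₁ j₂ hL hclosed htrans hj hInc
      have : (wcount L W i : ℝ) ≤ (#(VIS j₁ j₂ L W j) : ℝ) := by exact_mod_cast h3
      simp only [hp]
      linarith
    · have : (0:ℝ) ≤ (#(VIS j₁ j₂ L W j) : ℝ) := by positivity
      linarith
  · show (0:ℝ) ≤ p i
    simp [hp]

lemma cval_inl_def (ν : Fin n → ℝ) (j : Fin r) (i : Fin n) :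
    cval j₁ j₂ (Sum.inl (j, i)) ν
      = (∑ i' ∈ univ.erase i, (if Inc j₁ j₂ j i' then (1:ℝ) else 0) * ν i')
        - (if Inc j₁ j₂ j i then (1:ℝ) else 0) * ν i := rfl

lemma cval_inr_def (ν : Fin n → ℝ) (i : Fin n) : cval j₁ j₂ (Sum.inr i) ν = ν i := rfl

end Graph

section Translate
variable {r n : ℕ} (j₁ j₂ : Fin n → Fin r)

/-- transition label count formula -/
lemma tvec_apply_of_lab {m' : ℕ} (f : Fin m' → Fin m' → Option (Fin n))
    (w : ℕ → Fin m') (lab : ℕ → Fin n) (L : ℕ)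
    (hlab : ∀ k < L, f (w k) (w (k+1)) = some (lab k)) (i : Fin n) :
    (tvec f w L) i = #(filter (fun k => lab k = i) (range L)) := by
  rw [tvec, Finsupp.finset_sum_apply, Finset.card_filter]
  refine Finset.sum_congr rfl fun k hk => ?_
  rw [hlab k (mem_range.mp hk)]
  simp [mvec, Finsupp.single_apply]

/-- a closed dart walk gives a closed walk for the transition structure `fE` -/
lemma dart_to_IsCWV {m' : ℕ} (e : Fin m' ≃ (Fin n × Bool))
    (L : ℕ) (W : ℕ → Fin n × Bool) (hL : 0 < L) (hclosed : W L = W 0)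
    (htrans : ∀ k < L, dcond j₁ j₂ (W k) (W (k+1))) :
    IsCWV (fun a b => if dcond j₁ j₂ (e a) (e b) then some (e a).1 else none)
      (Finsupp.equivFunOnFinite.symm (fun i => wcount L W i)) := by
  set f : Fin m' → Fin m' → Option (Fin n) :=
    fun a b => if dcond j₁ j₂ (e a) (e b) then some (e a).1 else none with hf
  have hlab : ∀ k < L, f (e.symm (W k)) (e.symm (W (k+1))) = some (W k).1 := by
    intro k hk
    simp only [hf, Equiv.apply_symm_apply]
    rw [if_pos (htrans k hk)]
  refine ⟨L, fun k => e.symm (W k), hL,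
    by show e.symm (W L) = e.symm (W 0); rw [hclosed], ?_, ?_⟩
  · intro k hk
    rw [hlab k hk]
    rfl
  · ext i
    rw [tvec_apply_of_lab f _ (fun k => (W k).1) L hlab i]
    rfl

/-- conversely, every closed `fE`-walk vector is in the cone -/
lemma IsCWV_to_cone (hj : ∀ i, j₁ i ≠ j₂ i) {m' : ℕ} (e : Fin m' ≃ (Fin n × Bool))
    (q : Fin n →₀ ℕ)
    (h : IsCWV (fun a b => if dcond j₁ j₂ (e a) (e b) then some (e a).1 else none) q) :
    ∀ c, 0 ≤ cval j₁ j₂ c (fun i => (q i : ℝ)) := by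
  obtain ⟨L, w, hL, hclosed, htrans, rfl⟩ := h
  set W : ℕ → Fin n × Bool := fun k => e (w k) with hW
  have hdc : ∀ k < L, dcond j₁ j₂ (W k) (W (k+1)) := by
    intro k hk
    have h2 := htrans k hk
    by_contra hc
    have h3 : ((fun a b => if dcond j₁ j₂ (e a) (e b) then some (e a).1 else none)
        (w k) (w (k+1))) = none := by
      show (if dcond j₁ j₂ (e (w k)) (e (w (k+1))) then some ((e (w k)).1) else none) = none
      exact if_neg hc
    rw [h3] at h2
    simp at h2
  have hlab : ∀ k < L, (fun a b => if dcond j₁ j₂ (e a) (e b) then some (e a).1 else none)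
      (w k) (w (k+1)) = some (W k).1 := by
    intro k hk
    show (if dcond j₁ j₂ (e (w k)) (e (w (k+1))) then some ((e (w k)).1) else none) = some (W k).1
    rw [if_pos (hdc k hk)]
  have hcl : W L = W 0 := by rw [hW]; show e (w L) = e (w 0); rw [hclosed]
  have hq : ∀ i, (tvec (fun a b => if dcond j₁ j₂ (e a) (e b) then some (e a).1 else none) w L) i
      = wcount L W i := by
    intro i
    rw [tvec_apply_of_lab _ _ (fun k => (W k).1) L hlab i]
    rfl
  have := walk_cone j₁ j₂ hj hL hcl hdc
  intro c
  have heq : (fun i => ((tvec (fun a b => if dcond j₁ j₂ (e a) (e b) then some (e a).1 else none) w L) i : ℝ))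
      = (fun i => (wcount L W i : ℝ)) := by
    funext i; rw [hq]
  rw [heq]
  exact this c

end Translate

end Stmt10Aux


open Stmt10Aux in
/-- for a cycle code, the Newton polyhedron of the edge zeta function of the
normal graph — the convex cone generated by the exponent vectors of monomials with nonzero
coefficient — is the fundamental cone `K(H)`. -/
theorem stmt10 {r n : ℕ} (H : Matrix (Fin r) (Fin n) (ZMod 2))
    (j₁ j₂ : Fin n → Fin r) (hj : ∀ i, j₁ i ≠ j₂ i)
    (hH : ∀ j i, H j i = 1 ↔ (j = j₁ i ∨ j = j₂ i))
    (ζ : MvPowerSeries (Fin n) ℤ)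
    (hζ : ζ * Matrix.det (1 - normalGraphUM j₁ j₂) = 1) :
    (Submodule.span {c : ℝ // 0 ≤ c}
        {x : Fin n → ℝ | ∃ p : Fin n → ℕ,
          MvPowerSeries.coeff (Finsupp.equivFunOnFinite.symm p) ζ ≠ 0 ∧
          x = fun i => (p i : ℝ)} : Set (Fin n → ℝ)) =
      {ν | InFundCone H ν} := by
  classical
  set e : Fin (Fintype.card (Fin n × Bool)) ≃ (Fin n × Bool) :=
    (Fintype.equivFin (Fin n × Bool)).symm with he
  set f : Fin (Fintype.card (Fin n × Bool)) → Fin (Fintype.card (Fin n × Bool)) → Option (Fin n) :=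
    fun a b => if dcond j₁ j₂ (e a) (e b) then some (e a).1 else none with hf
  -- identify the two matrices
  have hmat : matOf f = (normalGraphUM j₁ j₂).submatrix ⇑e ⇑e := by
    funext a b
    show (if dcond j₁ j₂ (e a) (e b) then some ((e a).1) else none).elim 0 MvPowerSeries.X
        = normalGraphUM j₁ j₂ (e a) (e b)
    by_cases hc : dcond j₁ j₂ (e a) (e b)
    · rw [if_pos hc]
      show MvPowerSeries.X (e a).1 = _
      unfold normalGraphUM
      exact (if_pos hc).symm
    · rw [if_neg hc]
      show (0 : MvPowerSeries (Fin n) ℤ) = _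
      unfold normalGraphUM
      exact (if_neg hc).symm
  have hdetmat : Matrix.det (1 - matOf f) = Matrix.det (1 - normalGraphUM j₁ j₂) := by
    rw [hmat]
    have h1 : (1 : Matrix (Fin (Fintype.card (Fin n × Bool))) (Fin (Fintype.card (Fin n × Bool)))
          (MvPowerSeries (Fin n) ℤ)) - (normalGraphUM j₁ j₂).submatrix ⇑e ⇑e
        = (1 - normalGraphUM j₁ j₂).submatrix ⇑e ⇑e := by
      ext a b : 2
      simp only [Matrix.sub_apply, Matrix.submatrix_apply]
      congr 1
      rw [Matrix.one_apply, Matrix.one_apply]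
      simp [EmbeddingLike.apply_eq_iff_eq]
    rw [h1, Matrix.det_submatrix_equiv_self]
  have hzeq : ζ = zetaOf f := by
    have h2 : ζ * Matrix.det (1 - matOf f) = 1 := by rw [hdetmat]; exact hζ
    have h3 := detOf_mul_zetaOf f
    calc ζ = ζ * (Matrix.det (1 - matOf f) * zetaOf f) := by rw [h3, mul_one]
      _ = (ζ * Matrix.det (1 - matOf f)) * zetaOf f := by ring
      _ = zetaOf f := by rw [h2, one_mul]
  -- translate InFundCone into the cval cone
  have hvval : ∀ (j : Fin r) (i : Fin n),
      ((H j i).val : ℝ) = if Inc j₁ j₂ j i then 1 else 0 := by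
    intro j i
    by_cases hInc : Inc j₁ j₂ j i
    · rw [if_pos hInc, (hH j i).mpr hInc]
      norm_num [ZMod.val_one]
    · rw [if_neg hInc]
      have h0 : H j i = 0 := by
        have hx : ∀ x : ZMod 2, x = 0 ∨ x = 1 := by decide
        rcases hx (H j i) with h | h
        · exact h
        · exact absurd ((hH j i).mp h) hInc
      rw [h0]
      norm_num [ZMod.val_zero]
  have hIFC : ∀ ν : Fin n → ℝ, InFundCone H ν ↔ ∀ c, 0 ≤ cval j₁ j₂ c ν := by
    intro ν
    have e1 : ∀ (j : Fin r) (i' : Fin n), (if Inc j₁ j₂ j i' then (1:ℝ) else 0) * ν i'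
        = ((H j i').val : ℝ) * ν i' := fun j i' => by rw [hvval]
    constructor
    · rintro ⟨h1, h2⟩ c
      rcases c with ⟨j, i⟩ | i
      · rw [cval_inl_def, sub_nonneg]
        simp only [e1]
        exact h2 j i
      · exact h1 i
    · intro h
      constructor
      · exact fun i => h (Sum.inr i)
      · intro j i
        have h3 := h (Sum.inl (j, i))
        rw [cval_inl_def, sub_nonneg] at h3
        simp only [e1] at h3
        exact h3
  -- the fundamental cone as a submodule over nonnegative reals
  let KMod : Submodule {c : ℝ // 0 ≤ c} (Fin n → ℝ) :=
    { carrier := {ν | ∀ c, 0 ≤ cval j₁ j₂ c ν}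
      add_mem' := by
        intro a b ha hb c
        have h2 : (a + b : Fin n → ℝ) = fun i => a i + b i := rfl
        rw [h2, cval_add]
        exact add_nonneg (ha c) (hb c)
      zero_mem' := by
        intro c
        have h2 : ((0 : Fin n → ℝ)) = fun _ => (0:ℝ) := rfl
        rw [h2, cval_zero]
      smul_mem' := by
        intro t ν hν c
        have h2 : (t • ν : Fin n → ℝ) = fun i => t.1 * ν i := rfl
        rw [h2, cval_smul]
        exact mul_nonneg t.2 (hν c) }
  -- every generator lies in the fundamental cone
  have hSsub : {x : Fin n → ℝ | ∃ p : Fin n → ℕ,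
      MvPowerSeries.coeff (Finsupp.equivFunOnFinite.symm p) ζ ≠ 0 ∧
      x = fun i => (p i : ℝ)} ⊆ ↑KMod := by
    rintro x ⟨p, hcoeff, rfl⟩
    have hq : MvPowerSeries.coeff (Finsupp.equivFunOnFinite.symm p) (zetaOf f) ≠ 0 := by
      rw [← hzeq]; exact hcoeff
    have hclos := support_zeta f _ hq
    have hcone : ∀ q ∈ AddSubmonoid.closure {q' : Fin n →₀ ℕ | IsCWV f q'},
        ∀ c, 0 ≤ cval j₁ j₂ c (fun i => (q i : ℝ)) := by
      intro q hq'
      induction hq' using AddSubmonoid.closure_induction with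
      | mem q' hq'w =>
        rw [hf] at hq'w
        exact IsCWV_to_cone j₁ j₂ hj e q' hq'w
      | zero =>
        intro c
        have h2 : (fun i => (((0 : Fin n →₀ ℕ)) i : ℝ)) = fun _ => (0:ℝ) := by
          funext i; simp
        rw [h2, cval_zero]
      | add q1 q2 hm1 hm2 hc1 hc2 =>
        intro c
        have h3 : (fun i => (((q1 + q2 : Fin n →₀ ℕ)) i : ℝ))
            = fun i => ((q1 i : ℝ) + (q2 i : ℝ)) := by
          funext i; push_cast [Finsupp.add_apply]; ring
        rw [h3, cval_add]
        exact add_nonneg (hc1 c) (hc2 c)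
    exact fun c => hcone _ hclos c
  -- conclude
  ext ν
  constructor
  · intro hν
    have hle := Submodule.span_le.mpr hSsub
    exact (hIFC ν).mpr (hle hν)
  · intro hν
    have hconeν := (hIFC ν).mp hν
    show ν ∈ (Submodule.span {c : ℝ // 0 ≤ c} _ : Submodule _ _)
    refine decomp j₁ j₂ hj _ ?_ (Set.ncard {c | cval j₁ j₂ c ν ≠ 0}) ν hconeν le_rfl
    intro L W hL hclosed htrans
    refine ⟨fun i => wcount L W i, ?_, rfl⟩
    rw [hzeq]
    have hcwv := dart_to_IsCWV j₁ j₂ e L W hL hclosed htrans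
    rw [← hf] at hcwv
    exact ne_of_gt (coeff_zeta_pos f _ hcwv)
end

section
/- Suppose every column of H has even weight, let T = T(H) be its Tanner graph with edge set E, and let d_i denote the degree of the bit node x_i. Let Ĉ = {y ∈ F₂^E : for every vertex v of T, the sum over F₂ of y_e over all edges e incident to v is zero} be the cycle code on T, and let Ĉ' = {y ∈ Ĉ : for each i, y takes the same value on all edges incident to x_i}. Define φ: Ĉ' → F₂ⁿ by letting φ(y)_i be the common value of y on the edges incident to x_i. Then φ is an injective F₂-linear map whose image is exactly C = {c ∈ F₂ⁿ : Hcᵀ = 0}; in other words, C is (isomorphic to) the punctured subcode φ(Ĉ') of the cycle code Ĉ. -/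
open Finset

instance tannerGraphAdjDecidable {R I : Type*} (H : Matrix R I (ZMod 2)) :
    DecidableRel (TannerGraph H).Adj := fun v w =>
  match v, w with
  | Sum.inl i, Sum.inr j => inferInstanceAs (Decidable (H j i = 1))
  | Sum.inr j, Sum.inl i => inferInstanceAs (Decidable (H j i = 1))
  | Sum.inl _, Sum.inl _ => inferInstanceAs (Decidable False)
  | Sum.inr _, Sum.inr _ => inferInstanceAs (Decidable False)

/-- The edge of the Tanner graph joining bit node `x_i` and check node `f_j`. -/
def tannerEdge {R I : Type*} (H : Matrix R I (ZMod 2)) (i : I) (j : R) (hj : H j i = 1) :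
    (TannerGraph H).edgeSet :=
  ⟨s(Sum.inl i, Sum.inr j), by exact hj⟩

lemma edge_form {r n : ℕ} (H : Matrix (Fin r) (Fin n) (ZMod 2))
    (e : (TannerGraph H).edgeSet) :
    ∃ (i : Fin n) (j : Fin r) (hj : H j i = 1), e = tannerEdge H i j hj := by
  obtain ⟨e, he⟩ := e
  induction e using Sym2.ind with
  | _ a b =>
    rw [SimpleGraph.mem_edgeSet] at he
    cases a with
    | inl i =>
      cases b with
      | inl i' => exact absurd he (by simp [TannerGraph])
      | inr j => exact ⟨i, j, he, rfl⟩
    | inr j =>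
      cases b with
      | inl i => exact ⟨i, j, he, Subtype.ext (Sym2.eq_swap)⟩
      | inr j' => exact absurd he (by simp [TannerGraph])

lemma tannerEdge_inj {r n : ℕ} {H : Matrix (Fin r) (Fin n) (ZMod 2)}
    {i i' : Fin n} {j j' : Fin r} {hj : H j i = 1} {hj' : H j' i' = 1}
    (h : tannerEdge H i j hj = tannerEdge H i' j' hj') : i = i' ∧ j = j' := by
  simp only [tannerEdge, Subtype.mk.injEq, Subtype.ext_iff, Sym2.eq_iff, Sym2.rel_iff', Prod.mk.injEq,
    Prod.swap_prod_mk] at h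
  rcases h with ⟨h1, h2⟩ | ⟨h1, h2⟩ <;> simp_all

lemma edge_bij {r n : ℕ} (H : Matrix (Fin r) (Fin n) (ZMod 2)) :
    Function.Bijective (fun p : {p : Fin n × Fin r // H p.2 p.1 = 1} =>
      tannerEdge H p.1.1 p.1.2 p.2) := by
  constructor
  · rintro ⟨⟨i, j⟩, hp⟩ ⟨⟨i', j'⟩, hp'⟩ h
    obtain ⟨h1, h2⟩ := tannerEdge_inj h
    simp_all
  · intro e
    obtain ⟨i, j, hj, rfl⟩ := edge_form H e
    exact ⟨⟨(i, j), hj⟩, rfl⟩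

/-- for a bit-even Tanner graph (with each bit node of positive degree), the
map `φ` sending `y ∈ Ĉ'` to the vector of common values at the bit nodes is an injective
`F₂`-linear map from `Ĉ'` onto `C`; i.e. `C` is the punctured subcode `φ(Ĉ')` of the
cycle code `Ĉ` on `T(H)`. -/
theorem stmt13 {r n : ℕ} (H : Matrix (Fin r) (Fin n) (ZMod 2))
    (heven : ∀ i, Even (Finset.univ.filter (fun j : Fin r => H j i = 1)).card)
    (hpos : ∀ i, ∃ j, H j i = 1)
    -- `Chat` is the cycle code on `T(H)`
    (Chat : Set ((TannerGraph H).edgeSet → ZMod 2))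
    (hChat : Chat = {y | ∀ v : Fin n ⊕ Fin r,
      ∑ e : (TannerGraph H).edgeSet, (if v ∈ (e : Sym2 (Fin n ⊕ Fin r)) then y e else 0) = 0})
    -- `Chat'` is the subcode of words constant on the edges at each bit node
    (Chat' : Set ((TannerGraph H).edgeSet → ZMod 2))
    (hChat' : Chat' = {y ∈ Chat | ∀ (i : Fin n) (j j' : Fin r)
      (hj : H j i = 1) (hj' : H j' i = 1),
      y (tannerEdge H i j hj) = y (tannerEdge H i j' hj')})
    -- `φ y i` is the common value of `y` on the edges incident to `x_i`
    (φ : ((TannerGraph H).edgeSet → ZMod 2) → (Fin n → ZMod 2))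
    (hφ : ∀ y ∈ Chat', ∀ (i : Fin n) (j : Fin r) (hj : H j i = 1),
      φ y i = y (tannerEdge H i j hj)) :
    Set.InjOn φ Chat' ∧
    (∀ y ∈ Chat', ∀ z ∈ Chat', φ (y + z) = φ y + φ z) ∧
    (∀ y ∈ Chat', ∀ a : ZMod 2, φ (a • y) = a • φ y) ∧
    φ '' Chat' = {c : Fin n → ZMod 2 | H.mulVec c = 0} := by
  have memChat' : ∀ y : (TannerGraph H).edgeSet → ZMod 2, y ∈ Chat' ↔
      ((∀ v : Fin n ⊕ Fin r,
          ∑ e : (TannerGraph H).edgeSet,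
            (if v ∈ (e : Sym2 (Fin n ⊕ Fin r)) then y e else 0) = 0) ∧
        (∀ (i : Fin n) (j j' : Fin r) (hj : H j i = 1) (hj' : H j' i = 1),
          y (tannerEdge H i j hj) = y (tannerEdge H i j' hj'))) := by
    intro y
    simp only [hChat', hChat, Set.mem_setOf_eq]
  -- reindex sums over edges by pairs (i,j) with H j i = 1
  have sum_eq : ∀ (F : (TannerGraph H).edgeSet → ZMod 2),
      ∑ e : (TannerGraph H).edgeSet, F e
        = ∑ p : {p : Fin n × Fin r // H p.2 p.1 = 1}, F (tannerEdge H p.1.1 p.1.2 p.2) :=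
    fun F => (Fintype.sum_bijective _ (edge_bij H) _ F (fun _ => rfl)).symm
  have sum_sub : ∀ (f : Fin n × Fin r → ZMod 2),
      ∑ p : {p : Fin n × Fin r // H p.2 p.1 = 1}, f p.1
        = ∑ q ∈ Finset.univ.filter (fun q : Fin n × Fin r => H q.2 q.1 = 1), f q := by
    intro f
    exact (Finset.sum_subtype _ (by simp) f).symm
  have two_cases : ∀ x : ZMod 2, x = 0 ∨ x = 1 := by decide
  -- the check-node sums
  have hcheck : ∀ (y : (TannerGraph H).edgeSet → ZMod 2) (c : Fin n → ZMod 2),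
      (∀ (i : Fin n) (j : Fin r) (hj : H j i = 1), y (tannerEdge H i j hj) = c i) →
      ∀ j : Fin r,
        ∑ e : (TannerGraph H).edgeSet,
            (if (Sum.inr j : Fin n ⊕ Fin r) ∈ (e : Sym2 (Fin n ⊕ Fin r)) then y e else 0)
          = ∑ i, H j i * c i := by
    intro y c hy j
    rw [sum_eq]
    have h1 : ∀ p : {p : Fin n × Fin r // H p.2 p.1 = 1},
        (if (Sum.inr j : Fin n ⊕ Fin r) ∈ ((tannerEdge H p.1.1 p.1.2 p.2 : (TannerGraph H).edgeSet) : Sym2 (Fin n ⊕ Fin r)) then y (tannerEdge H p.1.1 p.1.2 p.2) else 0)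
          = (fun q : Fin n × Fin r => if q.2 = j then c q.1 else 0) p.1 := by
      rintro ⟨⟨i', j'⟩, hp⟩
      rw [show y (tannerEdge H (⟨(i', j'), hp⟩ : {p : Fin n × Fin r // H p.2 p.1 = 1}).1.1 (⟨(i', j'), hp⟩ : {p : Fin n × Fin r // H p.2 p.1 = 1}).1.2 hp) = c i' from hy i' j' hp]
      by_cases h : j' = j
      · subst h; simp [tannerEdge]
      · simp [tannerEdge, h, Ne.symm h]
    rw [Finset.sum_congr rfl (fun p _ => h1 p),
      sum_sub (fun q : Fin n × Fin r => if q.2 = j then c q.1 else 0),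
      Finset.sum_filter, Fintype.sum_prod_type]
    refine Finset.sum_congr rfl (fun i _ => ?_)
    rw [Finset.sum_eq_single j (fun b _ hb => by simp [hb]) (by simp)]
    rcases two_cases (H j i) with h | h <;> simp [h]
  -- the bit-node sums
  have hbit : ∀ (y : (TannerGraph H).edgeSet → ZMod 2) (c : Fin n → ZMod 2),
      (∀ (i : Fin n) (j : Fin r) (hj : H j i = 1), y (tannerEdge H i j hj) = c i) →
      ∀ i : Fin n,
        ∑ e : (TannerGraph H).edgeSet,
            (if (Sum.inl i : Fin n ⊕ Fin r) ∈ (e : Sym2 (Fin n ⊕ Fin r)) then y e else 0)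
          = 0 := by
    intro y c hy i
    rw [sum_eq]
    have h1 : ∀ p : {p : Fin n × Fin r // H p.2 p.1 = 1},
        (if (Sum.inl i : Fin n ⊕ Fin r) ∈ ((tannerEdge H p.1.1 p.1.2 p.2 : (TannerGraph H).edgeSet) : Sym2 (Fin n ⊕ Fin r)) then y (tannerEdge H p.1.1 p.1.2 p.2) else 0)
          = (fun q : Fin n × Fin r => if q.1 = i then c i else 0) p.1 := by
      rintro ⟨⟨i', j'⟩, hp⟩
      rw [show y (tannerEdge H (⟨(i', j'), hp⟩ : {p : Fin n × Fin r // H p.2 p.1 = 1}).1.1 (⟨(i', j'), hp⟩ : {p : Fin n × Fin r // H p.2 p.1 = 1}).1.2 hp) = c i' from hy i' j' hp]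
      by_cases h : i' = i
      · subst h; simp [tannerEdge]
      · simp [tannerEdge, h, Ne.symm h]
    rw [Finset.sum_congr rfl (fun p _ => h1 p),
      sum_sub (fun q : Fin n × Fin r => if q.1 = i then c i else 0),
      Finset.sum_filter, Fintype.sum_prod_type]
    have h2 : ∀ i' : Fin n,
        (∑ j' : Fin r, if H j' i' = 1 then if i' = i then c i else 0 else 0)
          = if i' = i then (Finset.univ.filter (fun j : Fin r => H j i = 1)).card • c i else 0 := by
      intro i'
      by_cases h : i' = i
      · subst h
        simp only [if_pos rfl, ← Finset.sum_filter, Finset.sum_const, Finset.filter_true, if_true]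
      · simp [h]
    rw [Finset.sum_congr rfl (fun i' _ => h2 i'), Finset.sum_ite_eq' Finset.univ i
      (fun _ => (Finset.univ.filter (fun j : Fin r => H j i = 1)).card • c i)]
    obtain ⟨m, hm⟩ := heven i
    simp only [Finset.mem_univ, if_pos, hm, add_nsmul, CharTwo.add_self_eq_zero]
  -- constant value extraction for members of Chat'
  have hconst : ∀ y ∈ Chat', ∀ (i : Fin n) (j : Fin r) (hj : H j i = 1),
      y (tannerEdge H i j hj) = φ y i := fun y hy i j hj => (hφ y hy i j hj).symm
  refine ⟨?_, ?_, ?_, ?_⟩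
  · -- injectivity
    intro y hy z hz h
    funext e
    obtain ⟨i, j, hj, rfl⟩ := edge_form H e
    rw [hconst y hy i j hj, hconst z hz i j hj, h]
  · -- additivity
    intro y hy z hz
    obtain ⟨hyC, hyc⟩ := (memChat' y).mp hy
    obtain ⟨hzC, hzc⟩ := (memChat' z).mp hz
    have hmem : y + z ∈ Chat' := by
      refine (memChat' _).mpr ⟨fun v => ?_, fun i j j' hj hj' => ?_⟩
      · rw [show (∑ e : (TannerGraph H).edgeSet,
          (if v ∈ (e : Sym2 (Fin n ⊕ Fin r)) then (y + z) e else 0)) =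
          (∑ e : (TannerGraph H).edgeSet,
          ((if v ∈ (e : Sym2 (Fin n ⊕ Fin r)) then y e else 0) +
           (if v ∈ (e : Sym2 (Fin n ⊕ Fin r)) then z e else 0))) from
          Finset.sum_congr rfl (fun e _ => by by_cases h : v ∈ (e : Sym2 (Fin n ⊕ Fin r)) <;> simp [h]),
          Finset.sum_add_distrib, hyC v, hzC v, add_zero]
      · simp only [Pi.add_apply, hyc i j j' hj hj', hzc i j j' hj hj']
    funext i
    obtain ⟨j, hj⟩ := hpos i
    rw [hφ _ hmem i j hj]
    simp only [Pi.add_apply]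
    rw [hφ y hy i j hj, hφ z hz i j hj]
  · -- scalar multiplication
    intro y hy a
    rcases two_cases a with h | h
    · subst h
      have h0 : (0 : ZMod 2) • y ∈ Chat' := by
        refine (memChat' _).mpr ⟨fun v => ?_, fun i j j' hj hj' => ?_⟩ <;> simp
      funext i
      obtain ⟨j, hj⟩ := hpos i
      rw [hφ _ h0 i j hj]
      simp
    · subst h
      simp
  · -- image
    ext c
    constructor
    · rintro ⟨y, hy, rfl⟩
      obtain ⟨hyC, hyc⟩ := (memChat' y).mp hy
      funext j
      show H.mulVec (φ y) j = 0
      rw [show H.mulVec (φ y) j = ∑ i, H j i * φ y i from rfl,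
        ← hcheck y (φ y) (hconst y hy) j]
      exact hyC (Sum.inr j)
    · intro hc
      have hc' : H.mulVec c = 0 := hc
      classical
      set y : (TannerGraph H).edgeSet → ZMod 2 :=
        fun e => c (edge_form H e).choose with hydef
      have hy : ∀ (i : Fin n) (j : Fin r) (hj : H j i = 1),
          y (tannerEdge H i j hj) = c i := by
        intro i j hj
        obtain ⟨j', hj', heq⟩ := (edge_form H (tannerEdge H i j hj)).choose_spec
        rw [hydef]
        exact congrArg c (tannerEdge_inj heq.symm).1
      have hmem : y ∈ Chat' := by
        refine (memChat' _).mpr ⟨fun v => ?_, fun i j j' hj hj' => ?_⟩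
        · cases v with
          | inl i => exact hbit y c hy i
          | inr j =>
            rw [hcheck y c hy j]
            exact congrFun hc' j
        · rw [hy i j hj, hy i j' hj']
      refine ⟨y, hmem, ?_⟩
      funext i
      obtain ⟨j, hj⟩ := hpos i
      rw [hφ y hmem i j hj, hy i j hj]
end
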